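/- Let N be a rooted binary level-k phylogenetic network on X, let T be a phylogenetic X-tree in D(N), and let A be a gap-free alignment of characters on X. Then PS(A,T) ≤ (k+1)·PS_sw(A,N) and PS(A,T) ≤ (k+1)·PS_sw'(A,N). -/

import Mathlib

noncomputable section
attribute [local instance] Classical.propDecidable

/-! ### Directed graphs -/

structure Dgraph (V : Type) where
  verts : Finset V
  edges : Finset (V × V)
  edges_sub : ∀ e ∈ edges, e.1 ∈ verts ∧ e.2 ∈ verts

namespace Dgraph

variable {V : Type}

def edgeRel (G : Dgraph V) (u v : V) : Prop := (u, v) ∈ G.edges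

def inDeg (G : Dgraph V) (v : V) : ℕ := (G.edges.filter (fun e => e.2 = v)).card

def outDeg (G : Dgraph V) (v : V) : ℕ := (G.edges.filter (fun e => e.1 = v)).card

def Reaches (G : Dgraph V) (u v : V) : Prop := Relation.ReflTransGen G.edgeRel u v

def Acyclic (G : Dgraph V) : Prop := ∀ u v, G.edgeRel u v → ¬ G.Reaches v u

def leaves (G : Dgraph V) : Finset V := G.verts.filter (fun v => G.outDeg v = 0)

def IsSubgraph (H G : Dgraph V) : Prop := H.verts ⊆ G.verts ∧ H.edges ⊆ G.edges

def adj (G : Dgraph V) (u v : V) : Prop := (u, v) ∈ G.edges ∨ (v, u) ∈ G.edges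

def Connected (G : Dgraph V) : Prop :=
  ∀ u ∈ G.verts, ∀ v ∈ G.verts, Relation.ReflTransGen G.adj u v

def deleteVert (G : Dgraph V) (x : V) : Dgraph V where
  verts := G.verts.erase x
  edges := G.edges.filter (fun e => e.1 ≠ x ∧ e.2 ≠ x)
  edges_sub := by
    intro e he
    simp only [Finset.mem_filter] at he
    obtain ⟨he1, hx1, hx2⟩ := he
    exact ⟨Finset.mem_erase.mpr ⟨hx1, (G.edges_sub e he1).1⟩,
           Finset.mem_erase.mpr ⟨hx2, (G.edges_sub e he1).2⟩⟩

/-- A graph is biconnected if it is connected and cannot be disconnected by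
deleting exactly one of its vertices. -/
def Biconnected (G : Dgraph V) : Prop :=
  G.Connected ∧ ∀ x ∈ G.verts, (G.deleteVert x).Connected

/-- A biconnected component: a maximal biconnected subgraph. -/
def IsBicomp (G H : Dgraph V) : Prop :=
  H.IsSubgraph G ∧ H.Biconnected ∧
  ∀ H' : Dgraph V, H'.IsSubgraph G → H'.Biconnected → H.IsSubgraph H' → H' = H

/-- One subdivision step: replace an edge `(u,w)` by `(u,v)`, `(v,w)` for a new vertex `v`. -/
def SubdivStep (G G' : Dgraph V) : Prop :=
  ∃ u w v, (u, w) ∈ G.edges ∧ v ∉ G.verts ∧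
    G'.verts = insert v G.verts ∧
    G'.edges = insert (u, v) (insert (v, w) (G.edges.erase (u, w)))

/-- `S.IsSubdivisionOf G` : `S` can be obtained from `G` by repeatedly subdividing edges
(`G` is a subdivision of itself). -/
def IsSubdivisionOf (S G : Dgraph V) : Prop := Relation.ReflTransGen SubdivStep G S

end Dgraph

/-! ### Rooted binary phylogenetic networks -/

structure PhyloNet (V : Type) (X : Finset V) where
  G : Dgraph V
  root : V
  root_mem : root ∈ G.verts
  root_inDeg : G.inDeg root = 0
  root_outDeg : G.outDeg root = 1
  acyclic : G.Acyclic
  reach : ∀ v ∈ G.verts, G.Reaches root v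
  degrees : ∀ v ∈ G.verts, v ≠ root →
      (G.inDeg v = 1 ∧ G.outDeg v = 2) ∨ (G.inDeg v = 2 ∧ G.outDeg v = 1) ∨
      (G.inDeg v = 1 ∧ G.outDeg v = 0)
  leaves_eq : G.leaves = X
  Xnonempty : X.Nonempty

namespace PhyloNet

variable {V : Type} {X : Finset V}

def IsRetic (N : PhyloNet V X) (v : V) : Prop := N.G.inDeg v = 2

/-- A rooted binary phylogenetic `X`-tree: a network with no reticulations. -/
def IsTreeNet (N : PhyloNet V X) : Prop := ∀ v ∈ N.G.verts, N.G.inDeg v ≤ 1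

/-- `S` is an embedding of `T` in `N`: a subgraph of `N` containing the root of `N`
that is a subdivision of `T`. -/
def IsEmbedding (N : PhyloNet V X) (T : PhyloNet V X) (S : Dgraph V) : Prop :=
  S.IsSubgraph N.G ∧ N.root ∈ S.verts ∧ S.IsSubdivisionOf T.G

/-- `T` is displayed by `N`. -/
def Displays (N T : PhyloNet V X) : Prop :=
  T.IsTreeNet ∧ ∃ S : Dgraph V, N.IsEmbedding T S

/-- A blob of `N`: a biconnected component with at least one reticulation. -/
def IsBlob (N : PhyloNet V X) (B : Dgraph V) : Prop :=
  Dgraph.IsBicomp N.G B ∧ ∃ v ∈ B.verts, N.IsRetic v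

/-- `N` is level-`k`: every biconnected component has at most `k` reticulations. -/
def IsLevel (N : PhyloNet V X) (k : ℕ) : Prop :=
  ∀ H : Dgraph V, Dgraph.IsBicomp N.G H →
    (H.verts.filter (fun v => N.IsRetic v)).card ≤ k

def numRetic (N : PhyloNet V X) : ℕ := (N.G.verts.filter (fun v => N.IsRetic v)).card

/-- Children of a blob `B`: vertices outside `B` that are children of vertices of `B`. -/
def blobChildren (N : PhyloNet V X) (B : Dgraph V) : Finset V :=
  N.G.verts.filter (fun v => v ∉ B.verts ∧ ∃ u ∈ B.verts, (u, v) ∈ N.G.edges)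

/-- Cluster of a vertex: its set of descendant leaves. -/
def cl (N : PhyloNet V X) (v : V) : Finset V := X.filter (fun x => N.G.Reaches v x)

end PhyloNet

/-- Source of a blob: its unique vertex of in-degree zero and out-degree two within the blob. -/
def IsSource {V : Type} (B : Dgraph V) (s : V) : Prop :=
  s ∈ B.verts ∧ B.inDeg s = 0 ∧ B.outDeg s = 2

/-! ### Characters and parsimony -/

/-- A character on `X`: a function that is surjective from `X` onto the set `C` of states. -/
def IsCharacter {V C : Type} (X : Finset V) (f : V → C) : Prop :=
  ∀ c : C, ∃ x ∈ X, f x = c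

/-- An extension of a character `f` (agrees with `f` on the leaves `X`). -/
def IsExtension {V C : Type} (X : Finset V) (f F : V → C) : Prop :=
  ∀ x ∈ X, F x = f x

/-- Changing number of an assignment `F` on a digraph. -/
def ch {V C : Type} (F : V → C) (G : Dgraph V) : ℕ :=
  (G.edges.filter (fun e => F e.1 ≠ F e.2)).card

/-- Parsimony score of `f` on `G` (leaves `X`). -/
def PS {V C : Type} (X : Finset V) (f : V → C) (G : Dgraph V) : ℕ :=
  sInf {n | ∃ F : V → C, IsExtension X f F ∧ ch F G = n}

/-- Softwired parsimony score of a single character on a network. -/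
def PSsw {V C : Type} {X : Finset V} (N : PhyloNet V X) (f : V → C) : ℕ :=
  sInf {n | ∃ T : PhyloNet V X, N.Displays T ∧ PS X f T.G = n}

/-! ### Switchings -/

def reticEdges {V : Type} {X : Finset V} (N : PhyloNet V X) : Finset (V × V) :=
  N.G.edges.filter (fun e => N.G.inDeg e.2 = 2)

def IsSwitching {V : Type} {X : Finset V} (N : PhyloNet V X) (R : Finset (V × V)) : Prop :=
  R ⊆ reticEdges N ∧
  ∀ v ∈ N.G.verts, N.IsRetic v → (R.filter (fun e => e.2 = v)).card = 1

def switchGraph {V : Type} {X : Finset V} (N : PhyloNet V X) (R : Finset (V × V)) : Dgraph V where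
  verts := N.G.verts
  edges := N.G.edges \ (reticEdges N \ R)
  edges_sub := by
    intro e he
    exact N.G.edges_sub e (Finset.mem_sdiff.mp he).1

/-- Suppressing a vertex of in-degree one and out-degree one. -/
def SuppressStep {V : Type} (G G' : Dgraph V) : Prop :=
  ∃ u v w, (u, v) ∈ G.edges ∧ (v, w) ∈ G.edges ∧ G.inDeg v = 1 ∧ G.outDeg v = 1 ∧
    u ≠ v ∧ w ≠ v ∧
    G'.verts = G.verts.erase v ∧
    G'.edges = insert (u, w) ((G.edges.erase (u, v)).erase (v, w))

/-- Deleting a vertex of out-degree zero that is not a leaf in `X`. -/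
def DeleteLeafStep {V : Type} (X : Finset V) (G G' : Dgraph V) : Prop :=
  ∃ v ∈ G.verts, v ∉ X ∧ G.outDeg v = 0 ∧
    G'.verts = G.verts.erase v ∧
    G'.edges = G.edges.filter (fun e => e.2 ≠ v)

def CleanupStep {V : Type} (X : Finset V) (G G' : Dgraph V) : Prop :=
  SuppressStep G G' ∨ DeleteLeafStep X G G'

/-- The switching `R` yields the phylogenetic tree `T`. -/
def Yields {V : Type} {X : Finset V} (N : PhyloNet V X) (R : Finset (V × V))
    (T : PhyloNet V X) : Prop :=
  T.IsTreeNet ∧ Relation.ReflTransGen (CleanupStep X) (switchGraph N R) T.G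

/-- Switching distance `h(N) - |R ∩ R'|`. -/
def switchDist {V : Type} {X : Finset V} (N : PhyloNet V X) (R R' : Finset (V × V)) : ℕ :=
  N.numRetic - (R ∩ R').card

/-! ### rSPR -/

def relPow {α : Type} (r : α → α → Prop) : ℕ → α → α → Prop
  | 0, a, b => a = b
  | n + 1, a, b => ∃ c, r a c ∧ relPow r n c b

/-- A single rooted subtree prune and regraft operation. -/
def rSPRStep {V : Type} {X : Finset V} (T T' : PhyloNet V X) : Prop :=
  ∃ u v p c a b u',
    (u, v) ∈ T.G.edges ∧ u ≠ T.root ∧ v ≠ T.root ∧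
    (p, u) ∈ T.G.edges ∧ (u, c) ∈ T.G.edges ∧ c ≠ v ∧
    (a, b) ∈ insert (p, c) (((T.G.edges.erase (u, v)).erase (p, u)).erase (u, c)) ∧
    ¬ T.G.Reaches v a ∧ ¬ T.G.Reaches v b ∧
    u' ∉ T.G.verts.erase u ∧
    T'.root = T.root ∧
    T'.G.verts = insert u' (T.G.verts.erase u) ∧
    T'.G.edges = insert (a, u') (insert (u', b) (insert (u', v)
      ((insert (p, c) (((T.G.edges.erase (u, v)).erase (p, u)).erase (u, c))).erase (a, b))))

/-- rSPR distance: minimum number of rSPR operations transforming `T` into `T'`. -/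
def rSPRdist {V : Type} {X : Finset V} (T T' : PhyloNet V X) : ℕ :=
  sInf {n | relPow rSPRStep n T T'}

/-! ### Root paths -/

/-- `(u,v)` is an edge of the root path of `G` (with root `r`). -/
def rootPathEdge {V : Type} (G : Dgraph V) (r u v : V) : Prop :=
  (u, v) ∈ G.edges ∧ G.outDeg u = 1 ∧
  Relation.ReflTransGen (fun a b => (a, b) ∈ G.edges ∧ G.outDeg a = 1) r u

/-- `F` has no character-state transition on any edge of the root path. -/
def NoRootPathChange {V C : Type} (G : Dgraph V) (r : V) (F : V → C) : Prop :=
  ∀ u v, rootPathEdge G r u v → F u = F v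

/-! ### Informative blobs -/

/-- `ind(F,B,S) = 0`: `F` assigns the same state to all children of the blob `B`. -/
def SameOnChildren {V C : Type} {X : Finset V} (N : PhyloNet V X) (B : Dgraph V)
    (F : V → C) : Prop :=
  ∀ a ∈ N.blobChildren B, ∀ b ∈ N.blobChildren B, F a = F b

/-- The number of blobs `B` of `N` with `ind(F,B,S) = 1`. -/
def infBlobCount {V C : Type} {X : Finset V} (N : PhyloNet V X) (F : V → C) : ℕ :=
  Set.ncard {B : Dgraph V | N.IsBlob B ∧ ¬ SameOnChildren N B F}

/-- `b(f,N,S)`: the number of informative blobs of `N` relative to `S` and `f`. -/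
def blobScore {V C : Type} {X : Finset V} (N : PhyloNet V X) (f : V → C) (S : Dgraph V) : ℕ :=
  sInf {m | ∃ F : V → C, IsExtension X f F ∧ ch F S = PS X f S ∧ infBlobCount N F = m}

/-- `F` realises `b(f,N,S)`. -/
def Realises {V C : Type} {X : Finset V} (N : PhyloNet V X) (f : V → C) (S : Dgraph V)
    (F : V → C) : Prop :=
  IsExtension X f F ∧ ch F S = PS X f S ∧ infBlobCount N F = blobScore N f S

/-- A blob `B` is non-informative relative to `S` and `f`. -/
def NonInformative {V C : Type} {X : Finset V} (N : PhyloNet V X) (B S : Dgraph V)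
    (f : V → C) : Prop :=
  ∃ F : V → C, IsExtension X f F ∧ ch F S = PS X f S ∧ SameOnChildren N B F

/-! ### Blob reduction / cluster tree pairs -/

/-- Longest-path distance from the root. -/
def distFromRoot {V : Type} {X : Finset V} (N : PhyloNet V X) (v : V) : ℕ :=
  sSup {n | relPow N.G.edgeRel n N.root v}

/-- The subgraph of `S` rooted at `s`. -/
def subAt {V : Type} (S : Dgraph V) (s : V) : Dgraph V where
  verts := insert s (S.verts.filter (fun v => S.Reaches s v))
  edges := S.edges.filter (fun e => S.Reaches s e.1)
  edges_sub := by
    intro e he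
    simp only [Finset.mem_filter] at he
    obtain ⟨he1, hr⟩ := he
    refine ⟨Finset.mem_insert.mpr (Or.inr (Finset.mem_filter.mpr ⟨(S.edges_sub e he1).1, hr⟩)),
      Finset.mem_insert.mpr (Or.inr (Finset.mem_filter.mpr ⟨(S.edges_sub e he1).2, ?_⟩))⟩
    exact hr.tail (show S.edgeRel e.1 e.2 from he1)

/-- `S(Y)`: the subtree of `S` rooted at `s` together with a new root `ρY` and edge `(ρY, s)`. -/
def clusterY {V : Type} (S : Dgraph V) (s ρY : V) : Dgraph V where
  verts := insert ρY (subAt S s).verts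
  edges := insert (ρY, s) (subAt S s).edges
  edges_sub := by
    intro e he
    rcases Finset.mem_insert.mp he with h | h
    · subst h
      exact ⟨Finset.mem_insert_self _ _,
        Finset.mem_insert.mpr (Or.inr (Finset.mem_insert_self _ _))⟩
    · have h2 := (subAt S s).edges_sub e h
      exact ⟨Finset.mem_insert.mpr (Or.inr h2.1), Finset.mem_insert.mpr (Or.inr h2.2)⟩

/-- `S(Ȳ)`: `S` with the subtree rooted at `s` replaced by a single new leaf `y`. -/
def clusterYbar {V : Type} (S : Dgraph V) (s y : V) : Dgraph V where
  verts := insert y (S.verts.filter (fun v => ¬ S.Reaches s v))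
  edges := (S.edges.filter (fun e => ¬ S.Reaches s e.1 ∧ ¬ S.Reaches s e.2)) ∪
           ((S.edges.filter (fun e => e.2 = s ∧ ¬ S.Reaches s e.1)).image (fun e => (e.1, y)))
  edges_sub := by
    intro e he
    rcases Finset.mem_union.mp he with h | h
    · simp only [Finset.mem_filter] at h
      exact ⟨Finset.mem_insert.mpr (Or.inr (Finset.mem_filter.mpr ⟨(S.edges_sub _ h.1).1, h.2.1⟩)),
        Finset.mem_insert.mpr (Or.inr (Finset.mem_filter.mpr ⟨(S.edges_sub _ h.1).2, h.2.2⟩))⟩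
    · simp only [Finset.mem_image, Finset.mem_filter] at h
      obtain ⟨a, ⟨ha, _, hnr⟩, hae⟩ := h
      constructor
      · rw [← hae]
        exact Finset.mem_insert.mpr (Or.inr (Finset.mem_filter.mpr ⟨(S.edges_sub _ ha).1, hnr⟩))
      · rw [← hae]
        exact Finset.mem_insert_self _ _

/-- A pair of cluster extensions with respect to `f`. -/
def ClusterExtPair {V C : Type} (X Y : Finset V) (y ρY : V) (f FY FYb : V → C) : Prop :=
  (∀ x ∈ Y, FY x = f x) ∧ (∀ x ∈ X \ Y, FYb x = f x) ∧ FYb y = FY ρY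

/-! ### Parental trees -/

/-- A vertex of `U*(N)`: a directed path in `N` starting at the root. -/
def UstarVert {V : Type} {X : Finset V} (N : PhyloNet V X) (p : List V) : Prop :=
  p ≠ [] ∧ p.head? = some N.root ∧ p.Chain' (fun a b => (a, b) ∈ N.G.edges)

/-- An edge of `U*(N)`: `q` extends `p` by one additional edge of `N`. -/
def UstarEdge {V : Type} {X : Finset V} (N : PhyloNet V X) (p q : List V) : Prop :=
  UstarVert N p ∧ UstarVert N q ∧ ∃ w, q = p ++ [w]

/-- `T` is a parental tree of `N`: obtained from a subgraph of `U*(N)` by suppressing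
in-degree-one out-degree-one vertices; its leaves are labelled bijectively by `X`
via the endpoint of the corresponding path. -/
def IsParentalTree {V : Type} {X : Finset V} (N : PhyloNet V X) {L : Finset (List V)}
    (T : PhyloNet (List V) L) : Prop :=
  T.IsTreeNet ∧
  (∀ x ∈ X, ∃! p, p ∈ L ∧ p.getLast? = some x) ∧
  (∀ p ∈ L, ∃ x ∈ X, p.getLast? = some x) ∧
  ∃ H : Dgraph (List V),
    (∀ p ∈ H.verts, UstarVert N p) ∧
    (∀ e ∈ H.edges, UstarEdge N e.1 e.2) ∧
    Relation.ReflTransGen SuppressStep H T.G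

/-- Parsimony score of a character `f` on a tree whose leaves are labelled by
elements of `X` via the last vertex of the corresponding path. -/
def PSlab {V C : Type} (L : Finset (List V)) (f : V → C) (G : Dgraph (List V)) : ℕ :=
  sInf {n | ∃ F : List V → C,
    (∀ p ∈ L, ∀ x, p.getLast? = some x → F p = f x) ∧ ch F G = n}

/-- Parental parsimony score. -/
def PSpa {V C : Type} {X : Finset V} (N : PhyloNet V X) (f : V → C) : ℕ :=
  sInf {n | ∃ (L : Finset (List V)) (T : PhyloNet (List V) L),
    IsParentalTree N T ∧ PSlab L f T.G = n}

/-! ### Undirected graphs, semi-directed networks -/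

structure UGraph (V : Type) where
  verts : Finset V
  edges : Finset (Sym2 V)
  edges_sub : ∀ e ∈ edges, ∀ v ∈ e, v ∈ verts
  no_loops : ∀ e ∈ edges, ¬ e.IsDiag

namespace UGraph

variable {V : Type}

def adj (G : UGraph V) (u v : V) : Prop := s(u, v) ∈ G.edges

def degree (G : UGraph V) (v : V) : ℕ := (G.edges.filter (fun e => v ∈ e)).card

def Connected (G : UGraph V) : Prop :=
  ∀ u ∈ G.verts, ∀ v ∈ G.verts, Relation.ReflTransGen G.adj u v

end UGraph

/-- An unrooted binary phylogenetic `X`-tree: a connected undirected acyclic graph with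
leaf set `X` whose inner vertices all have degree three. -/
structure UTree (V : Type) (X : Finset V) where
  g : UGraph V
  connected : g.Connected
  card_eq : g.verts.card = g.edges.card + 1
  leaves_eq : g.verts.filter (fun v => g.degree v = 1) = X
  degree_cases : ∀ v ∈ g.verts, g.degree v = 1 ∨ g.degree v = 3

def USubdivStep {V : Type} (G G' : UGraph V) : Prop :=
  ∃ u w v, s(u, w) ∈ G.edges ∧ v ∉ G.verts ∧
    G'.verts = insert v G.verts ∧
    G'.edges = insert s(u, v) (insert s(v, w) (G.edges.erase s(u, w)))

def IsUSubdivisionOf {V : Type} (S G : UGraph V) : Prop :=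
  Relation.ReflTransGen USubdivStep G S

/-- A binary semi-directed network: directed (reticulation) edges and undirected edges. -/
structure SemiDir (V : Type) where
  verts : Finset V
  dirE : Finset (V × V)
  undirE : Finset (Sym2 V)
  dir_sub : ∀ e ∈ dirE, e.1 ∈ verts ∧ e.2 ∈ verts
  undir_sub : ∀ e ∈ undirE, ∀ v ∈ e, v ∈ verts
  dir_noloop : ∀ e ∈ dirE, e.1 ≠ e.2
  undir_noloop : ∀ e ∈ undirE, ¬ e.IsDiag

namespace SemiDir

variable {V : Type}

/-- The underlying undirected graph. -/
def und (Ns : SemiDir V) : UGraph V where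
  verts := Ns.verts
  edges := Ns.undirE ∪ Ns.dirE.image (fun e => s(e.1, e.2))
  edges_sub := by
    intro e he v hv
    rcases Finset.mem_union.mp he with h | h
    · exact Ns.undir_sub e h v hv
    · obtain ⟨a, ha, hae⟩ := Finset.mem_image.mp h
      rw [← hae] at hv
      rcases Sym2.mem_iff.mp hv with h1 | h1
      · rw [h1]; exact (Ns.dir_sub a ha).1
      · rw [h1]; exact (Ns.dir_sub a ha).2
  no_loops := by
    intro e he
    rcases Finset.mem_union.mp he with h | h
    · exact Ns.undir_noloop e h
    · obtain ⟨a, ha, hae⟩ := Finset.mem_image.mp h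
      rw [← hae]
      simp only [Sym2.isDiag_iff_proj_eq]
      exact Ns.dir_noloop a ha

def isRetic (Ns : SemiDir V) (v : V) : Prop :=
  (Ns.dirE.filter (fun e => e.2 = v)).card = 2

/-- An unrooted phylogenetic `X`-tree is displayed by a semi-directed network. -/
def Displays {X : Finset V} (Ns : SemiDir V) (Tu : UTree V X) : Prop :=
  ∃ S : SemiDir V, S.verts ⊆ Ns.verts ∧ S.dirE ⊆ Ns.dirE ∧ S.undirE ⊆ Ns.undirE ∧
    (∀ v : V, Ns.isRetic v → (S.dirE.filter (fun e => e.2 = v)).card ≤ 1) ∧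
    IsUSubdivisionOf S.und Tu.g

end SemiDir

/-- `Nr` is a rooted partner of `Ns`: `Ns` is obtained from `Nr` by deleting the root,
suppressing the child of the root, and omitting the direction of every
non-reticulation edge. -/
def RootedPartner {V : Type} {X : Finset V} (Nr : PhyloNet V X) (Ns : SemiDir V) : Prop :=
  ∃ v w w', (Nr.root, v) ∈ Nr.G.edges ∧ (v, w) ∈ Nr.G.edges ∧ (v, w') ∈ Nr.G.edges ∧ w ≠ w' ∧
    Ns.verts = (Nr.G.verts.erase Nr.root).erase v ∧
    Ns.dirE = Nr.G.edges.filter (fun e => Nr.G.inDeg e.2 = 2 ∧ e.1 ≠ v) ∧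
    Ns.undirE = insert s(w, w')
      ((Nr.G.edges.filter (fun e => Nr.G.inDeg e.2 ≠ 2 ∧ e.1 ≠ Nr.root ∧ e.1 ≠ v)).image
        (fun e => s(e.1, e.2)))

/-- `Tu` is obtained from the rooted tree `T` by deleting the root and suppressing
its child. -/
def UnrootOf {V : Type} {X : Finset V} (T : PhyloNet V X) (Tu : UTree V X) : Prop :=
  ∃ v w w', (T.root, v) ∈ T.G.edges ∧ (v, w) ∈ T.G.edges ∧ (v, w') ∈ T.G.edges ∧ w ≠ w' ∧
    Tu.g.verts = (T.G.verts.erase T.root).erase v ∧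
    Tu.g.edges = insert s(w, w')
      ((T.G.edges.filter (fun e => e.1 ≠ T.root ∧ e.1 ≠ v)).image (fun e => s(e.1, e.2)))

/-- Changing number on an undirected graph. -/
def chU {V C : Type} (F : V → C) (G : UGraph V) : ℕ :=
  (G.edges.filter (fun e => Sym2.lift ⟨fun a b => F a ≠ F b, fun a b => propext ne_comm⟩ e)).card

/-- Parsimony score on an undirected graph with leaf set `X`. -/
def PSU {V C : Type} (X : Finset V) (f : V → C) (G : UGraph V) : ℕ :=
  sInf {n | ∃ F : V → C, IsExtension X f F ∧ chU F G = n}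

/-- Softwired parsimony score of a character on a semi-directed network. -/
def PSswU {V C : Type} (X : Finset V) (Ns : SemiDir V) (f : V → C) : ℕ :=
  sInf {n | ∃ Tu : UTree V X, Ns.Displays Tu ∧ PSU X f Tu.g = n}

/-! ### Auxiliary lemmas for the main theorem -/

section MainBoundAux

open Relation

variable {V : Type}

theorem Dgraph.ext' {G H : Dgraph V} (hv : G.verts = H.verts) (he : G.edges = H.edges) :
    G = H := by
  cases G; cases H; simp_all

theorem rtg_symm_of {r : V → V → Prop} (hs : ∀ a b, r a b → r b a) {a b : V}
    (h : Relation.ReflTransGen r a b) : Relation.ReflTransGen r b a := by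
  induction h with
  | refl => exact .refl
  | tail _ h2 ih => exact (Relation.ReflTransGen.single (hs _ _ h2)).trans ih

theorem ch_mono {C : Type} (F : V → C) {G H : Dgraph V} (h : G.edges ⊆ H.edges) :
    ch F G ≤ ch F H :=
  Finset.card_le_card (Finset.filter_subset_filter _ h)

theorem ch_subdiv_le {C : Type} (F : V → C) {G G' : Dgraph V} (h : Dgraph.SubdivStep G G') :
    ch F G ≤ ch F G' := by
  obtain ⟨u, w, v, huw, hv, hV, hE⟩ := h
  have hu : u ∈ G.verts := (G.edges_sub _ huw).1
  have hw : w ∈ G.verts := (G.edges_sub _ huw).2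
  have hvu : v ≠ u := fun h => hv (h ▸ hu)
  have hvw : v ≠ w := fun h => hv (h ▸ hw)
  by_cases hd : F u ≠ F w
  · -- the subdivided edge changes
    have hor : F u ≠ F v ∨ F v ≠ F w := by
      by_contra hc
      push_neg at hc
      exact hd (hc.1.trans hc.2)
    have herase : ∀ x ∈ (G.edges.erase (u, w)).filter (fun e => F e.1 ≠ F e.2),
        x ∈ G'.edges.filter (fun e => F e.1 ≠ F e.2) := by
      intro x hx
      simp only [Finset.mem_filter, Finset.mem_erase] at hx ⊢
      exact ⟨hE ▸ Finset.mem_insert_of_mem (Finset.mem_insert_of_mem (Finset.mem_erase.mpr hx.1)), hx.2⟩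
    obtain he | he := hor
    · have hm : insert (u, v) ((G.edges.erase (u, w)).filter (fun e => F e.1 ≠ F e.2)) ⊆
          G'.edges.filter (fun e => F e.1 ≠ F e.2) := by
        intro x hx
        rcases Finset.mem_insert.mp hx with rfl | hx
        · simp only [Finset.mem_filter]
          exact ⟨hE ▸ Finset.mem_insert_self _ _, he⟩
        · exact herase _ hx
      have hnm : (u, v) ∉ (G.edges.erase (u, w)).filter (fun e => F e.1 ≠ F e.2) := by
        intro hx
        have : (u, v) ∈ G.edges := Finset.mem_of_mem_erase (Finset.mem_of_mem_filter _ hx)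
        exact hv (G.edges_sub _ this).2
      have hsub2 : G.edges.filter (fun e => F e.1 ≠ F e.2) ⊆
          insert (u, w) ((G.edges.erase (u, w)).filter (fun e => F e.1 ≠ F e.2)) := by
        intro x hx
        by_cases hxe : x = (u, w)
        · exact hxe ▸ Finset.mem_insert_self _ _
        · refine Finset.mem_insert_of_mem ?_
          rw [Finset.filter_erase]
          exact Finset.mem_erase.mpr ⟨hxe, hx⟩
      calc ch F G ≤ (insert (u, w) ((G.edges.erase (u, w)).filter (fun e => F e.1 ≠ F e.2))).card :=
            Finset.card_le_card hsub2
        _ ≤ ((G.edges.erase (u, w)).filter (fun e => F e.1 ≠ F e.2)).card + 1 :=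
            Finset.card_insert_le _ _
        _ = (insert (u, v) ((G.edges.erase (u, w)).filter (fun e => F e.1 ≠ F e.2))).card := by
            rw [Finset.card_insert_of_notMem hnm]
        _ ≤ ch F G' := Finset.card_le_card hm
    · have hm : insert (v, w) ((G.edges.erase (u, w)).filter (fun e => F e.1 ≠ F e.2)) ⊆
          G'.edges.filter (fun e => F e.1 ≠ F e.2) := by
        intro x hx
        rcases Finset.mem_insert.mp hx with rfl | hx
        · simp only [Finset.mem_filter]
          exact ⟨hE ▸ Finset.mem_insert_of_mem (Finset.mem_insert_self _ _), he⟩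
        · exact herase _ hx
      have hnm : (v, w) ∉ (G.edges.erase (u, w)).filter (fun e => F e.1 ≠ F e.2) := by
        intro hx
        have : (v, w) ∈ G.edges := Finset.mem_of_mem_erase (Finset.mem_of_mem_filter _ hx)
        exact hv (G.edges_sub _ this).1
      have hsub2 : G.edges.filter (fun e => F e.1 ≠ F e.2) ⊆
          insert (u, w) ((G.edges.erase (u, w)).filter (fun e => F e.1 ≠ F e.2)) := by
        intro x hx
        by_cases hxe : x = (u, w)
        · exact hxe ▸ Finset.mem_insert_self _ _
        · refine Finset.mem_insert_of_mem ?_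
          rw [Finset.filter_erase]
          exact Finset.mem_erase.mpr ⟨hxe, hx⟩
      calc ch F G ≤ (insert (u, w) ((G.edges.erase (u, w)).filter (fun e => F e.1 ≠ F e.2))).card :=
            Finset.card_le_card hsub2
        _ ≤ ((G.edges.erase (u, w)).filter (fun e => F e.1 ≠ F e.2)).card + 1 :=
            Finset.card_insert_le _ _
        _ = (insert (v, w) ((G.edges.erase (u, w)).filter (fun e => F e.1 ≠ F e.2))).card := by
            rw [Finset.card_insert_of_notMem hnm]
        _ ≤ ch F G' := Finset.card_le_card hm
  · -- the subdivided edge does not change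
    push_neg at hd
    refine Finset.card_le_card ?_
    intro x hx
    simp only [Finset.mem_filter] at hx ⊢
    refine ⟨?_, hx.2⟩
    have hxne : x ≠ (u, w) := by
      rintro rfl
      exact hx.2 hd
    rw [hE]
    exact Finset.mem_insert_of_mem (Finset.mem_insert_of_mem (Finset.mem_erase.mpr ⟨hxne, hx.1⟩))

theorem ch_subdivRTG_le {C : Type} (F : V → C) {G S : Dgraph V}
    (h : Relation.ReflTransGen Dgraph.SubdivStep G S) : ch F G ≤ ch F S := by
  induction h with
  | refl => exact le_rfl
  | tail _ h2 ih => exact ih.trans (ch_subdiv_le F h2)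

theorem PS_set_nonempty {C : Type} (X : Finset V) (f : V → C) (G : Dgraph V) :
    {n | ∃ F : V → C, IsExtension X f F ∧ ch F G = n}.Nonempty :=
  ⟨ch f G, f, fun _ _ => rfl, rfl⟩

theorem PS_le_ch {C : Type} {X : Finset V} {f F : V → C} (G : Dgraph V)
    (hF : IsExtension X f F) : PS X f G ≤ ch F G :=
  Nat.sInf_le ⟨F, hF, rfl⟩

theorem PS_attained {C : Type} (X : Finset V) (f : V → C) (G : Dgraph V) :
    ∃ F : V → C, IsExtension X f F ∧ ch F G = PS X f G :=
  Nat.sInf_mem (PS_set_nonempty X f G)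

end MainBoundAux
section MainBoundAuxB

open Relation

variable {V : Type}

theorem inDeg_mono {G H : Dgraph V} (h : G.edges ⊆ H.edges) (v : V) :
    G.inDeg v ≤ H.inDeg v :=
  Finset.card_le_card (Finset.filter_subset_filter _ h)

theorem subdiv_step_inDeg {G G' : Dgraph V} (u w v : V) (huw : (u, w) ∈ G.edges)
    (hv : v ∉ G.verts)
    (hE : G'.edges = insert (u, v) (insert (v, w) (G.edges.erase (u, w)))) (t : V) :
    G'.inDeg t = if t = v then 1 else G.inDeg t := by
  have hu : u ∈ G.verts := (G.edges_sub _ huw).1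
  have hw : w ∈ G.verts := (G.edges_sub _ huw).2
  have hvu : v ≠ u := fun h => hv (h ▸ hu)
  have hvw : v ≠ w := fun h => hv (h ▸ hw)
  have hnvw : (v, w) ∉ G.edges := fun h => hv (G.edges_sub _ h).1
  unfold Dgraph.inDeg
  rw [hE, Finset.filter_insert, Finset.filter_insert, Finset.filter_erase]
  by_cases htv : t = v
  · subst htv
    rw [if_pos (show (u, t).2 = t from rfl),
      if_neg (show ¬ (t, w).2 = t from fun h => hvw h.symm)]
    have hempty : G.edges.filter (fun e => e.2 = t) = ∅ := by
      refine Finset.eq_empty_of_forall_notMem fun e he => ?_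
      rw [Finset.mem_filter] at he
      exact hv (he.2 ▸ (G.edges_sub _ he.1).2)
    rw [hempty, Finset.erase_empty]
    simp
  · rw [if_neg htv, if_neg (show ¬ (u, v).2 = t from fun h => htv h.symm)]
    by_cases htw : t = w
    · subst htw
      rw [if_pos (show (v, t).2 = t from rfl)]
      have hmem : (u, t) ∈ G.edges.filter (fun e => e.2 = t) :=
        Finset.mem_filter.mpr ⟨huw, rfl⟩
      have hvnot : (v, t) ∉ (G.edges.filter (fun e => e.2 = t)).erase (u, t) := by
        intro h
        exact hnvw (Finset.mem_of_mem_filter _ (Finset.mem_of_mem_erase h))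
      rw [Finset.card_insert_of_notMem hvnot, Finset.card_erase_of_mem hmem]
      have hpos : 0 < (G.edges.filter (fun e => e.2 = t)).card :=
        Finset.card_pos.mpr ⟨(u, t), hmem⟩
      omega
    · rw [if_neg (show ¬ (v, w).2 = t from fun h => htw h.symm)]
      have : (u, w) ∉ G.edges.filter (fun e => e.2 = t) := by
        intro h
        exact htw ((Finset.mem_filter.mp h).2).symm
      rw [Finset.erase_eq_of_notMem this]

theorem subdiv_inv {X : Finset V} (T' : PhyloNet V X) (hTree : T'.IsTreeNet)
    {S : Dgraph V} (h : Relation.ReflTransGen Dgraph.SubdivStep T'.G S) :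
    X ⊆ S.verts ∧ T'.root ∈ S.verts ∧ S.inDeg T'.root = 0 ∧
      (∀ y ∈ S.verts, y ≠ T'.root → S.inDeg y = 1) := by
  induction h with
  | refl =>
    refine ⟨?_, T'.root_mem, T'.root_inDeg, ?_⟩
    · intro x hx
      have hxl : x ∈ T'.G.leaves := by rw [T'.leaves_eq]; exact hx
      exact Finset.mem_of_mem_filter _ hxl
    · intro y hy hyr
      have h1 := T'.degrees y hy hyr
      have h2 := hTree y hy
      rcases h1 with ⟨h, _⟩ | ⟨h, _⟩ | ⟨h, _⟩ <;> omega
  | tail _ h2 ih =>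
    obtain ⟨hX, hroot, hrd, hd⟩ := ih
    obtain ⟨u, w, v, huw, hv, hV, hE⟩ := h2
    have hdeg := subdiv_step_inDeg u w v huw hv hE
    have hrv : T'.root ≠ v := fun h => hv (h ▸ hroot)
    refine ⟨?_, by rw [hV]; exact Finset.mem_insert_of_mem hroot, ?_, ?_⟩
    · intro x hx
      rw [hV]
      exact Finset.mem_insert_of_mem (hX hx)
    · rw [hdeg, if_neg hrv]; exact hrd
    · intro y hy hyr
      rw [hdeg]
      by_cases hyv : y = v
      · rw [if_pos hyv]
      · rw [if_neg hyv]
        rw [hV, Finset.mem_insert] at hy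
        exact hd y (hy.resolve_left hyv) hyr

/-- Transfer an optimal extension from the tree to the embedding. -/
theorem exists_ext_on_subdiv {C : Type} {X : Finset V} (T' : PhyloNet V X)
    {S : Dgraph V} (h : Relation.ReflTransGen Dgraph.SubdivStep T'.G S)
    (f : V → C) :
    ∃ F : V → C, IsExtension X f F ∧ ch F S ≤ PS X f T'.G := by
  obtain ⟨F0, hF0, hch0⟩ := PS_attained X f T'.G
  have hXv : X ⊆ T'.G.verts := by
    intro x hx
    have hxl : x ∈ T'.G.leaves := by rw [T'.leaves_eq]; exact hx
    exact Finset.mem_of_mem_filter _ hxl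
  suffices H : ∀ {S : Dgraph V}, Relation.ReflTransGen Dgraph.SubdivStep T'.G S →
      X ⊆ S.verts ∧ ∃ F : V → C, IsExtension X f F ∧ ch F S ≤ PS X f T'.G by
    exact (H h).2
  intro S h
  induction h with
  | refl => exact ⟨hXv, F0, hF0, le_of_eq hch0⟩
  | @tail b c _ h2 ih =>
    obtain ⟨hXS, F, hF, hch⟩ := ih
    obtain ⟨u, w, v, huw, hv, hV, hE⟩ := h2
    have hu : u ∈ b.verts := (b.edges_sub _ huw).1
    have hw : w ∈ b.verts := (b.edges_sub _ huw).2
    have hvu : v ≠ u := fun h => hv (h ▸ hu)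
    have hvw : v ≠ w := fun h => hv (h ▸ hw)
    have hnuv : (u, v) ∉ b.edges := fun h => hv (b.edges_sub _ h).2
    have hvX : v ∉ X := fun h => hv (hXS h)
    set F' := Function.update F v (F w) with hF'
    have hFu : F' u = F u := Function.update_of_ne (Ne.symm hvu) _ _
    have hFw : F' w = F w := Function.update_of_ne (Ne.symm hvw) _ _
    have hFv : F' v = F w := Function.update_self _ _ _
    refine ⟨?_, F', ?_, ?_⟩
    · intro x hx
      rw [hV]
      exact Finset.mem_insert_of_mem (hXS hx)
    · intro x hx
      have hxv : x ≠ v := fun hh => hvX (hh ▸ hx)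
      rw [hF', Function.update_of_ne hxv]
      exact hF x hx
    · refine le_trans ?_ hch
      unfold ch
      rw [hE, Finset.filter_insert, Finset.filter_insert]
      have hrest : (b.edges.erase (u, w)).filter (fun e => F' e.1 ≠ F' e.2) =
          (b.edges.filter (fun e => F e.1 ≠ F e.2)).erase (u, w) := by
        rw [← Finset.filter_erase]
        refine Finset.filter_congr fun e he => ?_
        have he' := Finset.mem_of_mem_erase he
        have h1 : e.1 ≠ v := fun h => hv (h ▸ (b.edges_sub _ he').1)
        have h2 : e.2 ≠ v := fun h => hv (h ▸ (b.edges_sub _ he').2)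
        rw [hF', Function.update_of_ne h1, Function.update_of_ne h2]
    -- condition on the two new edges
      have hc2 : ¬ (F' (v, w).1 ≠ F' (v, w).2) := by
        simp only [hFv, hFw]
        exact fun h => h rfl
      rw [if_neg hc2, hrest]
      by_cases hd : F' (u, v).1 ≠ F' (u, v).2
      · rw [if_pos hd]
        have hduw : F u ≠ F w := by
          simpa only [hFu, hFv] using hd
        have hmem : (u, w) ∈ b.edges.filter (fun e => F e.1 ≠ F e.2) :=
          Finset.mem_filter.mpr ⟨huw, hduw⟩
        have hnotmem : (u, v) ∉ (b.edges.filter (fun e => F e.1 ≠ F e.2)).erase (u, w) := by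
          intro hmm
          exact hnuv (Finset.mem_of_mem_filter _ (Finset.mem_of_mem_erase hmm))
        rw [Finset.card_insert_of_notMem hnotmem, Finset.card_erase_of_mem hmem]
        have hpos : 0 < (b.edges.filter (fun e => F e.1 ≠ F e.2)).card :=
          Finset.card_pos.mpr ⟨(u, w), hmem⟩
        omega
      · rw [if_neg hd]
        exact Finset.card_le_card (Finset.erase_subset _ _)

end MainBoundAuxB
section MainBoundAuxC

open Relation

variable {V : Type} {X : Finset V}

/-- Rank of a vertex: number of ancestors (including itself if in the graph). -/
def rnk (N : PhyloNet V X) (v : V) : ℕ :=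
  (N.G.verts.filter (fun u => N.G.Reaches u v)).card

theorem rnk_lt (N : PhyloNet V X) {a b : V} (hab : (a, b) ∈ N.G.edges) :
    rnk N a < rnk N b := by
  have hb : b ∈ N.G.verts := (N.G.edges_sub _ hab).2
  refine Finset.card_lt_card ⟨?_, ?_⟩
  · intro u hu
    rw [Finset.mem_filter] at hu ⊢
    exact ⟨hu.1, hu.2.tail hab⟩
  · intro hsub
    have hbmem : b ∈ N.G.verts.filter (fun u => N.G.Reaches u b) :=
      Finset.mem_filter.mpr ⟨hb, .refl⟩
    have hm := hsub hbmem
    rw [Finset.mem_filter] at hm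
    exact N.acyclic a b hab hm.2

/-- Embedding data extracted from a display. -/
structure GoodEmb (N : PhyloNet V X) (S' : Dgraph V) : Prop where
  esub : S'.edges ⊆ N.G.edges
  vsub : S'.verts ⊆ N.G.verts
  rootm : N.root ∈ S'.verts
  rootd : S'.inDeg N.root = 0
  deg1 : ∀ y ∈ S'.verts, y ≠ N.root → S'.inDeg y = 1
  hX : X ⊆ S'.verts

theorem goodemb_of_displays (N T' : PhyloNet V X) (h : N.Displays T') :
    ∃ S' : Dgraph V, Relation.ReflTransGen Dgraph.SubdivStep T'.G S' ∧ GoodEmb N S' := by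
  obtain ⟨htree, S', hsub, hroot, hsubdiv⟩ := h
  obtain ⟨hX, _, hrd, hdeg⟩ := subdiv_inv T' htree hsubdiv
  have hrr : T'.root = N.root := by
    by_contra hne
    have h1 := hdeg N.root hroot (fun hh => hne hh.symm)
    have h2 : S'.inDeg N.root ≤ N.G.inDeg N.root := inDeg_mono hsub.2 _
    rw [N.root_inDeg] at h2
    omega
  exact ⟨S', hsubdiv, ⟨hsub.2, hsub.1, hroot, by rw [← hrr]; exact hrd,
    fun y hy hyr => hdeg y hy (by rw [hrr]; exact hyr), hX⟩⟩

theorem exists_in_edge (N : PhyloNet V X) {v : V} (hv : v ∈ N.G.verts) (hvr : v ≠ N.root) :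
    ∃ u, (u, v) ∈ N.G.edges := by
  have hdeg := N.degrees v hv hvr
  have hpos : 0 < N.G.inDeg v := by
    rcases hdeg with ⟨h, _⟩ | ⟨h, _⟩ | ⟨h, _⟩ <;> omega
  obtain ⟨e, he⟩ := Finset.card_pos.mp hpos
  rw [Finset.mem_filter] at he
  refine ⟨e.1, ?_⟩
  rw [← he.2]
  exact he.1

theorem inDeg_le_two (N : PhyloNet V X) {v : V} (hv : v ∈ N.G.verts) :
    N.G.inDeg v ≤ 2 := by
  by_cases hvr : v = N.root
  · subst hvr; rw [N.root_inDeg]; omega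
  · rcases N.degrees v hv hvr with ⟨h, _⟩ | ⟨h, _⟩ | ⟨h, _⟩ <;> omega

/-- Canonical parent: the `S'`-parent if one exists, else any `N`-parent. -/
def par (N : PhyloNet V X) (S' : Dgraph V) (v : V) : V :=
  if h : ∃ u, (u, v) ∈ S'.edges then h.choose
  else if h2 : ∃ u, (u, v) ∈ N.G.edges then h2.choose else v

theorem par_S'_edge_of_ex {N : PhyloNet V X} {S' : Dgraph V} {v : V}
    (h1 : ∃ u, (u, v) ∈ S'.edges) : (par N S' v, v) ∈ S'.edges := by
  unfold par
  rw [dif_pos h1]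
  exact h1.choose_spec

theorem par_edge {N : PhyloNet V X} {S' : Dgraph V} (E : GoodEmb N S') {v : V}
    (hv : v ∈ N.G.verts) (hvr : v ≠ N.root) : (par N S' v, v) ∈ N.G.edges := by
  unfold par
  split_ifs with h1 h2
  · exact E.esub h1.choose_spec
  · exact h2.choose_spec
  · exact absurd (exists_in_edge N hv hvr) h2

theorem exists_S'_in_edge {N : PhyloNet V X} {S' : Dgraph V} (E : GoodEmb N S') {v : V}
    (hv : v ∈ S'.verts) (hvr : v ≠ N.root) : ∃ u, (u, v) ∈ S'.edges := by
  have h1 := E.deg1 v hv hvr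
  have hpos : 0 < S'.inDeg v := by omega
  obtain ⟨e, he⟩ := Finset.card_pos.mp hpos
  rw [Finset.mem_filter] at he
  refine ⟨e.1, ?_⟩
  rw [← he.2]
  exact he.1

theorem par_S'_edge {N : PhyloNet V X} {S' : Dgraph V} (E : GoodEmb N S') {v : V}
    (hv : v ∈ S'.verts) (hvr : v ≠ N.root) : (par N S' v, v) ∈ S'.edges :=
  par_S'_edge_of_ex (exists_S'_in_edge E hv hvr)

theorem S'_in_edge_unique {N : PhyloNet V X} {S' : Dgraph V} (E : GoodEmb N S') {x v : V}
    (hxv : (x, v) ∈ S'.edges) : x = par N S' v := by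
  have hv : v ∈ S'.verts := (S'.edges_sub _ hxv).2
  have hvr : v ≠ N.root := by
    rintro rfl
    have hpos : 0 < S'.inDeg N.root :=
      Finset.card_pos.mpr ⟨(x, N.root), Finset.mem_filter.mpr ⟨hxv, rfl⟩⟩
    rw [E.rootd] at hpos
    omega
  have h1 := E.deg1 v hv hvr
  obtain ⟨a, ha⟩ := Finset.card_eq_one.mp h1
  have h2 : (x, v) ∈ S'.edges.filter (fun e => e.2 = v) := Finset.mem_filter.mpr ⟨hxv, rfl⟩
  have h3 : (par N S' v, v) ∈ S'.edges.filter (fun e => e.2 = v) :=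
    Finset.mem_filter.mpr ⟨par_S'_edge E hv hvr, rfl⟩
  rw [ha, Finset.mem_singleton] at h2 h3
  have := h2.trans h3.symm
  exact congrArg Prod.fst this

/-- One step up the canonical parent chain. -/
def upstep (N : PhyloNet V X) (S' : Dgraph V) (a b : V) : Prop :=
  a ∈ N.G.verts ∧ a ≠ N.root ∧ b = par N S' a

/-- The canonical ancestor chain relation. -/
def upR (N : PhyloNet V X) (S' : Dgraph V) : V → V → Prop :=
  Relation.ReflTransGen (upstep N S')

theorem upstep_edge {N : PhyloNet V X} {S' : Dgraph V} (E : GoodEmb N S') {a b : V}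
    (h : upstep N S' a b) : (b, a) ∈ N.G.edges := by
  obtain ⟨h1, h2, rfl⟩ := h
  exact par_edge E h1 h2

theorem upstep_mem {N : PhyloNet V X} {S' : Dgraph V} (E : GoodEmb N S') {a b : V}
    (h : upstep N S' a b) : b ∈ N.G.verts :=
  (N.G.edges_sub _ (upstep_edge E h)).1

theorem upR_mem {N : PhyloNet V X} {S' : Dgraph V} (E : GoodEmb N S') {a b : V}
    (ha : a ∈ N.G.verts) (h : upR N S' a b) : b ∈ N.G.verts := by
  induction h with
  | refl => exact ha
  | tail _ h2 _ => exact upstep_mem E h2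

theorem upR_rnk_le {N : PhyloNet V X} {S' : Dgraph V} (E : GoodEmb N S') {a b : V}
    (h : upR N S' a b) : rnk N b ≤ rnk N a := by
  induction h with
  | refl => exact le_rfl
  | tail _ h2 ih => exact le_trans (le_of_lt (rnk_lt N (upstep_edge E h2))) ih

theorem upR_eq_of_rnk_le {N : PhyloNet V X} {S' : Dgraph V} (E : GoodEmb N S') {a b : V}
    (h : upR N S' a b) (hr : rnk N a ≤ rnk N b) : a = b := by
  rcases Relation.ReflTransGen.cases_head h with rfl | ⟨c, hc, h2⟩
  · rfl
  · have h1 : rnk N c < rnk N a := rnk_lt N (upstep_edge E hc)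
    have h3 : rnk N b ≤ rnk N c := upR_rnk_le E h2
    omega

theorem upR_root_aux {N : PhyloNet V X} {S' : Dgraph V} (E : GoodEmb N S') :
    ∀ n, ∀ a ∈ N.G.verts, rnk N a ≤ n → upR N S' a N.root := by
  intro n
  induction n with
  | zero =>
    intro a ha hr
    have : a ∈ N.G.verts.filter (fun u => N.G.Reaches u a) := Finset.mem_filter.mpr ⟨ha, .refl⟩
    have hpos : 0 < rnk N a := Finset.card_pos.mpr ⟨a, this⟩
    omega
  | succ n ih =>
    intro a ha hr
    by_cases har : a = N.root
    · exact har ▸ Relation.ReflTransGen.refl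
    · have hstep : upstep N S' a (par N S' a) := ⟨ha, har, rfl⟩
      have hmem : par N S' a ∈ N.G.verts := upstep_mem E hstep
      have hlt : rnk N (par N S' a) < rnk N a := rnk_lt N (upstep_edge E hstep)
      exact Relation.ReflTransGen.head hstep (ih _ hmem (by omega))

theorem upR_root {N : PhyloNet V X} {S' : Dgraph V} (E : GoodEmb N S') {a : V}
    (ha : a ∈ N.G.verts) : upR N S' a N.root :=
  upR_root_aux E (rnk N a) a ha le_rfl

theorem upR_total {N : PhyloNet V X} {S' : Dgraph V} {x a b : V}
    (h1 : upR N S' x a) : upR N S' x b → upR N S' a b ∨ upR N S' b a := by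
  induction h1 using Relation.ReflTransGen.head_induction_on with
  | refl => exact fun h2 => Or.inl h2
  | @head a0 c0 hstep hrest ih =>
    intro h2
    rcases Relation.ReflTransGen.cases_head h2 with rfl | ⟨c', hc', h2'⟩
    · exact Or.inr (Relation.ReflTransGen.head hstep hrest)
    · have hcc : c' = c0 := hc'.2.2.trans hstep.2.2.symm
      exact ih (hcc ▸ h2')

theorem upR_ne_root_step {N : PhyloNet V X} {S' : Dgraph V} {a b : V}
    (h : upR N S' a b) (hne : a ≠ b) :
    a ∈ N.G.verts ∧ a ≠ N.root ∧ upR N S' (par N S' a) b := by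
  rcases Relation.ReflTransGen.cases_head h with rfl | ⟨c, hc, h2⟩
  · exact absurd rfl hne
  · obtain ⟨h1, h2', rfl⟩ := hc
    exact ⟨h1, h2', h2⟩

end MainBoundAuxC
section MainBoundAuxD

open Relation

variable {V : Type} {X : Finset V}

/-- Choose a maximal-rank element of a finite set (or default). -/
def anchorf (d : V) (rk : V → ℕ) (s : Finset V) : V :=
  if h : ∃ u ∈ s, ∀ u' ∈ s, rk u' ≤ rk u then h.choose else d

/-- The `S'`-vertices on the canonical ancestor chain of `v`. -/
def Aset (N : PhyloNet V X) (S' : Dgraph V) (v : V) : Finset V :=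
  S'.verts.filter (fun u => upR N S' v u)

/-- The propagated extension. -/
def Fxt {C : Type} (N : PhyloNet V X) (S' : Dgraph V) (F' : V → C) (v : V) : C :=
  if v ∈ S'.verts then F' v else F' (anchorf N.root (rnk N) (Aset N S' v))

theorem Fxt_S' {C : Type} {N : PhyloNet V X} {S' : Dgraph V} {F' : V → C} {v : V}
    (hv : v ∈ S'.verts) : Fxt N S' F' v = F' v := if_pos hv

theorem Aset_par {N : PhyloNet V X} {S' : Dgraph V} {v : V}
    (hv : v ∈ N.G.verts) (hvr : v ≠ N.root) (hvs : v ∉ S'.verts) :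
    Aset N S' v = Aset N S' (par N S' v) := by
  ext u
  simp only [Aset, Finset.mem_filter, and_congr_right_iff]
  intro hu
  constructor
  · intro h
    rcases Relation.ReflTransGen.cases_head h with rfl | ⟨c, hc, h2⟩
    · exact absurd hu hvs
    · exact hc.2.2 ▸ h2
  · intro h
    exact Relation.ReflTransGen.head ⟨hv, hvr, rfl⟩ h

theorem anchorf_self {N : PhyloNet V X} {S' : Dgraph V} (E : GoodEmb N S') {v : V}
    (hvS : v ∈ S'.verts) : anchorf N.root (rnk N) (Aset N S' v) = v := by
  have hvm : v ∈ Aset N S' v := Finset.mem_filter.mpr ⟨hvS, .refl⟩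
  have hex : ∃ u ∈ Aset N S' v, ∀ u' ∈ Aset N S' v, rnk N u' ≤ rnk N u := by
    refine ⟨v, hvm, fun u' hu' => ?_⟩
    exact upR_rnk_le E (Finset.mem_filter.mp hu').2
  unfold anchorf
  rw [dif_pos hex]
  obtain ⟨hmem, hmax⟩ := hex.choose_spec
  have h1 : upR N S' v hex.choose := (Finset.mem_filter.mp hmem).2
  have h2 : rnk N v ≤ rnk N hex.choose := hmax v hvm
  exact (upR_eq_of_rnk_le E h1 h2).symm

/-- Key property: the propagated extension does not change along canonical parent
edges into vertices outside `S'`. -/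
theorem Fxt_par {C : Type} {N : PhyloNet V X} {S' : Dgraph V} (E : GoodEmb N S')
    {F' : V → C} {v : V} (hv : v ∈ N.G.verts) (hvs : v ∉ S'.verts) :
    Fxt N S' F' v = Fxt N S' F' (par N S' v) := by
  have hvr : v ≠ N.root := fun h => hvs (h ▸ E.rootm)
  have hA := Aset_par hv hvr hvs (S' := S')
  rw [Fxt, if_neg hvs, hA]
  by_cases hp : par N S' v ∈ S'.verts
  · rw [Fxt, if_pos hp, anchorf_self E hp]
  · rw [Fxt, if_neg hp]

theorem three_le_card {α : Type} {a b c : α} {s : Finset α} (ha : a ∈ s) (hb : b ∈ s)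
    (hc : c ∈ s) (hab : a ≠ b) (hac : a ≠ c) (hbc : b ≠ c) : 3 ≤ s.card := by
  have hsub : ({a, b, c} : Finset α) ⊆ s := by
    intro x hx
    simp only [Finset.mem_insert, Finset.mem_singleton] at hx
    rcases hx with rfl | rfl | rfl <;> assumption
  have hcard : ({a, b, c} : Finset α).card = 3 := by
    rw [Finset.card_insert_of_notMem (by simp [hab, hac]),
      Finset.card_insert_of_notMem (by simp [hbc]), Finset.card_singleton]
  rw [← hcard]
  exact Finset.card_le_card hsub

/-- Every changing edge outside `S'` enters a reticulation by its non-canonical in-edge. -/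
theorem bad_edge_spec {C : Type} {N : PhyloNet V X} {S' : Dgraph V} (E : GoodEmb N S')
    {F' : V → C} {e : V × V}
    (he : e ∈ N.G.edges) (hch : Fxt N S' F' e.1 ≠ Fxt N S' F' e.2) (hes : e ∉ S'.edges) :
    e.2 ∈ N.G.verts ∧ e.2 ≠ N.root ∧ e.1 ≠ par N S' e.2 ∧ N.G.inDeg e.2 = 2 := by
  obtain ⟨x, y⟩ := e
  simp only at hch ⊢
  have hy : y ∈ N.G.verts := (N.G.edges_sub _ he).2
  have hyr : y ≠ N.root := by
    rintro rfl
    have hpos : 0 < N.G.inDeg N.root :=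
      Finset.card_pos.mpr ⟨(x, N.root), Finset.mem_filter.mpr ⟨he, rfl⟩⟩
    rw [N.root_inDeg] at hpos
    omega
  have hxpar : x ≠ par N S' y := by
    by_cases hys : y ∈ S'.verts
    · intro hx
      exact hes (hx ▸ par_S'_edge E hys hyr)
    · intro hx
      exact hch (hx ▸ (Fxt_par E hy hys).symm ▸ rfl)
  have hpe : (par N S' y, y) ∈ N.G.edges := par_edge E hy hyr
  have h2 : 2 ≤ N.G.inDeg y := by
    have hm1 : (x, y) ∈ N.G.edges.filter (fun e => e.2 = y) :=
      Finset.mem_filter.mpr ⟨he, rfl⟩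
    have hm2 : (par N S' y, y) ∈ N.G.edges.filter (fun e => e.2 = y) :=
      Finset.mem_filter.mpr ⟨hpe, rfl⟩
    have hne : (x, y) ≠ (par N S' y, y) := fun h => hxpar (congrArg Prod.fst h)
    exact Finset.one_lt_card.mpr ⟨_, hm1, _, hm2, hne⟩
  exact ⟨hy, hyr, hxpar, le_antisymm (inDeg_le_two N hy) h2⟩

/-- First counting bound: changes of the propagated extension on all of `N`. -/
theorem part1_count {C : Type} {N : PhyloNet V X} {S' : Dgraph V} (E : GoodEmb N S')
    (F' : V → C) :
    ch (Fxt N S' F') N.G ≤ ch F' S' +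
      (((N.G.edges.filter (fun e => Fxt N S' F' e.1 ≠ Fxt N S' F' e.2)) \ S'.edges).image
        Prod.snd).card := by
  classical
  set F := Fxt N S' F' with hF
  set CH := N.G.edges.filter (fun e => F e.1 ≠ F e.2) with hCH
  set BadE := CH \ S'.edges with hBadE
  have hsplit : CH ⊆ (S'.edges.filter (fun e => F e.1 ≠ F e.2)) ∪ BadE := by
    intro e he
    by_cases hes : e ∈ S'.edges
    · exact Finset.mem_union_left _
        (Finset.mem_filter.mpr ⟨hes, (Finset.mem_filter.mp he).2⟩)
    · exact Finset.mem_union_right _ (Finset.mem_sdiff.mpr ⟨he, hes⟩)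
  have hchS : (S'.edges.filter (fun e => F e.1 ≠ F e.2)).card = ch F' S' := by
    unfold ch
    congr 1
    refine Finset.filter_congr fun e he => ?_
    rw [hF, Fxt_S' (S'.edges_sub _ he).1, Fxt_S' (S'.edges_sub _ he).2]
  have hinj : (BadE.image Prod.snd).card = BadE.card := by
    refine Finset.card_image_of_injOn fun e1 h1 e2 h2 hsnd => ?_
    replace h1 := Finset.mem_coe.mp h1
    replace h2 := Finset.mem_coe.mp h2
    rw [Finset.mem_sdiff, hCH, Finset.mem_filter] at h1 h2
    obtain ⟨⟨he1, hc1⟩, hs1⟩ := h1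
    obtain ⟨⟨he2, hc2⟩, hs2⟩ := h2
    obtain ⟨hy1, hyr1, hp1, hd1⟩ := bad_edge_spec E he1 hc1 hs1
    obtain ⟨hy2, hyr2, hp2, hd2⟩ := bad_edge_spec E he2 hc2 hs2
    -- e1.2 = e2.2 =: y ; if e1.1 ≠ e2.1 we get three in-edges of y
    have hy12 : e1.2 = e2.2 := hsnd
    by_contra hne
    have hx12 : e1.1 ≠ e2.1 := by
      intro h
      exact hne (Prod.ext h hy12)
    have hm1 : (e1.1, e1.2) ∈ N.G.edges.filter (fun e => e.2 = e1.2) := by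
      refine Finset.mem_filter.mpr ⟨?_, rfl⟩
      rw [Prod.mk.eta]; exact he1
    have hm2 : (e2.1, e1.2) ∈ N.G.edges.filter (fun e => e.2 = e1.2) := by
      refine Finset.mem_filter.mpr ⟨?_, rfl⟩
      rw [hy12, Prod.mk.eta]; exact he2
    have hm3 : (par N S' e1.2, e1.2) ∈ N.G.edges.filter (fun e => e.2 = e1.2) :=
      Finset.mem_filter.mpr ⟨par_edge E hy1 hyr1, rfl⟩
    have h3 : 3 ≤ N.G.inDeg e1.2 := by
      refine three_le_card hm1 hm2 hm3 ?_ ?_ ?_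
      · intro h; injection h with ha hb; exact hx12 ha
      · intro h; injection h with ha hb; exact hp1 ha
      · intro h
        injection h with ha hb
        refine hp2 ?_
        rw [← hy12]
        exact ha
    omega
  calc ch F N.G = CH.card := rfl
    _ ≤ ((S'.edges.filter (fun e => F e.1 ≠ F e.2)) ∪ BadE).card := Finset.card_le_card hsplit
    _ ≤ (S'.edges.filter (fun e => F e.1 ≠ F e.2)).card + BadE.card := Finset.card_union_le _ _
    _ = ch F' S' + (BadE.image Prod.snd).card := by rw [hchS, hinj]

end MainBoundAuxD
section MainBoundAuxF1

open Relation

variable {V : Type}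

theorem Dgraph.adj_symm' (G : Dgraph V) {a b : V} (h : G.adj a b) : G.adj b a :=
  h.elim Or.inr Or.inl

theorem rtg_adj_symm (G : Dgraph V) {a b : V} (h : Relation.ReflTransGen G.adj a b) :
    Relation.ReflTransGen G.adj b a :=
  rtg_symm_of (fun _ _ => G.adj_symm') h

theorem adj_mono {G H : Dgraph V} (h : G.edges ⊆ H.edges) (a b : V) (hab : G.adj a b) :
    H.adj a b := hab.imp (fun hm => h hm) (fun hm => h hm)

theorem rtg_adj_mono {G H : Dgraph V} (h : G.edges ⊆ H.edges) {a b : V}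
    (hab : Relation.ReflTransGen G.adj a b) : Relation.ReflTransGen H.adj a b :=
  Relation.ReflTransGen.mono (adj_mono h) _ _ hab

/-- Union of two directed graphs. -/
def Dgraph.gunion (G H : Dgraph V) : Dgraph V where
  verts := G.verts ∪ H.verts
  edges := G.edges ∪ H.edges
  edges_sub := by
    intro e he
    rcases Finset.mem_union.mp he with h | h
    · exact ⟨Finset.mem_union_left _ (G.edges_sub e h).1,
        Finset.mem_union_left _ (G.edges_sub e h).2⟩
    · exact ⟨Finset.mem_union_right _ (H.edges_sub e h).1,
        Finset.mem_union_right _ (H.edges_sub e h).2⟩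

theorem delete_connected {G : Dgraph V} (hG : G.Biconnected) (z : V) :
    (G.deleteVert z).Connected := by
  by_cases hz : z ∈ G.verts
  · exact hG.2 z hz
  · intro a ha b hb
    have hGe : G.edges ⊆ (G.deleteVert z).edges := by
      intro e he
      refine Finset.mem_filter.mpr ⟨he, ?_, ?_⟩
      · intro hh; exact hz (hh ▸ (G.edges_sub e he).1)
      · intro hh; exact hz (hh ▸ (G.edges_sub e he).2)
    have ha' : a ∈ G.verts := Finset.mem_of_mem_erase ha
    have hb' : b ∈ G.verts := Finset.mem_of_mem_erase hb
    exact rtg_adj_mono hGe (hG.1 a ha' b hb')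

theorem union_biconnected {G H : Dgraph V} (hG : G.Biconnected) (hH : H.Biconnected)
    {u v : V} (huG : u ∈ G.verts) (huH : u ∈ H.verts) (hvG : v ∈ G.verts)
    (hvH : v ∈ H.verts) (huv : u ≠ v) : (G.gunion H).Biconnected := by
  have hGe : G.edges ⊆ (G.gunion H).edges := Finset.subset_union_left
  have hHe : H.edges ⊆ (G.gunion H).edges := Finset.subset_union_right
  constructor
  · intro a ha b hb
    have hreach : ∀ c ∈ (G.gunion H).verts, Relation.ReflTransGen (G.gunion H).adj c u := by
      intro c hc
      rcases Finset.mem_union.mp hc with h | h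
      · exact rtg_adj_mono hGe (hG.1 c h u huG)
      · exact rtg_adj_mono hHe (hH.1 c h u huH)
    exact (hreach a ha).trans (rtg_adj_symm _ (hreach b hb))
  · intro z _
    intro a ha b hb
    set c := if u = z then v else u with hc
    have hcz : c ≠ z := by
      rw [hc]
      split_ifs with h
      · exact fun hh => huv (h.trans hh.symm)
      · exact h
    have hcG : c ∈ G.verts := by rw [hc]; split_ifs <;> assumption
    have hcH : c ∈ H.verts := by rw [hc]; split_ifs <;> assumption
    have hdel : ∀ (K : Dgraph V), K.Biconnected → K.edges ⊆ (G.gunion H).edges →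
        (K.deleteVert z).edges ⊆ ((G.gunion H).deleteVert z).edges := by
      intro K _ hKe
      exact Finset.filter_subset_filter _ hKe
    have hreach : ∀ d ∈ ((G.gunion H).deleteVert z).verts,
        Relation.ReflTransGen ((G.gunion H).deleteVert z).adj d c := by
      intro d hd
      have hdz : d ≠ z := (Finset.mem_erase.mp hd).1
      have hdm : d ∈ G.verts ∪ H.verts := (Finset.mem_erase.mp hd).2
      rcases Finset.mem_union.mp hdm with h | h
      · have := delete_connected hG z d (Finset.mem_erase.mpr ⟨hdz, h⟩) c
          (Finset.mem_erase.mpr ⟨hcz, hcG⟩)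
        exact rtg_adj_mono (hdel G hG hGe) this
      · have := delete_connected hH z d (Finset.mem_erase.mpr ⟨hdz, h⟩) c
          (Finset.mem_erase.mpr ⟨hcz, hcH⟩)
        exact rtg_adj_mono (hdel H hH hHe) this
    exact (hreach a ha).trans (rtg_adj_symm _ (hreach b hb))

theorem isSubgraph_trans {G H K : Dgraph V} (h1 : G.IsSubgraph H) (h2 : H.IsSubgraph K) :
    G.IsSubgraph K := ⟨h1.1.trans h2.1, h1.2.trans h2.2⟩

/-- Every biconnected subgraph extends to a maximal one (a bicomp). -/
theorem exists_bicomp {G : Dgraph V} :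
    ∀ n (H : Dgraph V),
      (G.verts.card - H.verts.card) + (G.edges.card - H.edges.card) ≤ n →
      H.IsSubgraph G → H.Biconnected →
      ∃ B, Dgraph.IsBicomp G B ∧ H.IsSubgraph B := by
  intro n
  induction n with
  | zero =>
    intro H hm hsub hbi
    refine ⟨H, ⟨hsub, hbi, ?_⟩, ⟨subset_rfl, subset_rfl⟩⟩
    intro H' hsub' _ hHH'
    have hv1 : G.verts.card ≤ H.verts.card := by omega
    have he1 : G.edges.card ≤ H.edges.card := by omega
    have hveq : H.verts = G.verts := Finset.eq_of_subset_of_card_le hsub.1 hv1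
    have heeq : H.edges = G.edges := Finset.eq_of_subset_of_card_le hsub.2 he1
    refine Dgraph.ext' ?_ ?_
    · exact subset_antisymm (hveq ▸ hsub'.1) hHH'.1
    · exact subset_antisymm (heeq ▸ hsub'.2) hHH'.2
  | succ n ih =>
    intro H hm hsub hbi
    by_cases hmax : ∀ H', H'.IsSubgraph G → H'.Biconnected → H.IsSubgraph H' → H' = H
    · exact ⟨H, ⟨hsub, hbi, hmax⟩, ⟨subset_rfl, subset_rfl⟩⟩
    · push_neg at hmax
      obtain ⟨H', hsub', hbi', hHH', hne⟩ := hmax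
      have hv1 : H.verts.card ≤ H'.verts.card := Finset.card_le_card hHH'.1
      have he1 : H.edges.card ≤ H'.edges.card := Finset.card_le_card hHH'.2
      have hv2 : H'.verts.card ≤ G.verts.card := Finset.card_le_card hsub'.1
      have he2 : H'.edges.card ≤ G.edges.card := Finset.card_le_card hsub'.2
      have hstrict : H.verts.card < H'.verts.card ∨ H.edges.card < H'.edges.card := by
        by_contra hcon
        push_neg at hcon
        have hveq : H.verts = H'.verts :=
          Finset.eq_of_subset_of_card_le hHH'.1 hcon.1
        have heeq : H.edges = H'.edges :=
          Finset.eq_of_subset_of_card_le hHH'.2 hcon.2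
        exact hne (Dgraph.ext' hveq.symm heeq.symm)
      obtain ⟨B, hB, hH'B⟩ := ih H' (by omega) hsub' hbi'
      exact ⟨B, hB, isSubgraph_trans hHH' hH'B⟩

/-- Two bicomps sharing an edge are equal. -/
theorem bicomp_unique {G : Dgraph V} (hloop : ∀ e ∈ G.edges, e.1 ≠ e.2) {B1 B2 : Dgraph V}
    (h1 : Dgraph.IsBicomp G B1) (h2 : Dgraph.IsBicomp G B2) {e : V × V}
    (he1 : e ∈ B1.edges) (he2 : e ∈ B2.edges) : B1 = B2 := by
  have hu1 : e.1 ∈ B1.verts := (B1.edges_sub e he1).1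
  have hu2 : e.1 ∈ B2.verts := (B2.edges_sub e he2).1
  have hv1 : e.2 ∈ B1.verts := (B1.edges_sub e he1).2
  have hv2 : e.2 ∈ B2.verts := (B2.edges_sub e he2).2
  have hne : e.1 ≠ e.2 := hloop e (h1.1.2 he1)
  have hbi := union_biconnected h1.2.1 h2.2.1 hu1 hu2 hv1 hv2 hne
  have hsubU : (B1.gunion B2).IsSubgraph G :=
    ⟨Finset.union_subset h1.1.1 h2.1.1, Finset.union_subset h1.1.2 h2.1.2⟩
  have hB1 : B1.gunion B2 = B1 :=
    h1.2.2 _ hsubU hbi ⟨Finset.subset_union_left, Finset.subset_union_left⟩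
  have hB2 : B1.gunion B2 = B2 :=
    h2.2.2 _ hsubU hbi ⟨Finset.subset_union_right, Finset.subset_union_right⟩
  exact hB1.symm.trans hB2

end MainBoundAuxF1
section MainBoundAuxF2

open Relation

variable {V : Type} {X : Finset V}

theorem upR_antisymm {N : PhyloNet V X} {S' : Dgraph V} (E : GoodEmb N S') {a b : V}
    (h1 : upR N S' a b) (h2 : upR N S' b a) : a = b :=
  upR_eq_of_rnk_le E h1 (upR_rnk_le E h2)

theorem upR_root_eq {N : PhyloNet V X} {S' : Dgraph V} {z : V}
    (h : upR N S' N.root z) : z = N.root := by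
  rcases Relation.ReflTransGen.cases_head h with rfl | ⟨c, hc, _⟩
  · rfl
  · exact absurd rfl hc.2.1

/-- Segment of the canonical chain from `x` up to `m`. -/
def seg (N : PhyloNet V X) (S' : Dgraph V) (x m : V) : Finset V :=
  N.G.verts.filter (fun t => upR N S' x t ∧ upR N S' t m)

/-- Chain edges of a segment. -/
def chainE (N : PhyloNet V X) (S' : Dgraph V) (x m : V) : Finset (V × V) :=
  N.G.edges.filter (fun e => e.2 ∈ seg N S' x m ∧ e.2 ≠ m ∧ e.1 = par N S' e.2)

theorem seg_mem {N : PhyloNet V X} {S' : Dgraph V} {x m t : V} (h : t ∈ seg N S' x m) :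
    t ∈ N.G.verts ∧ upR N S' x t ∧ upR N S' t m := by
  have := Finset.mem_filter.mp h
  exact ⟨this.1, this.2.1, this.2.2⟩

theorem seg_mem' {N : PhyloNet V X} {S' : Dgraph V} {x m t : V} (ht : t ∈ N.G.verts)
    (h1 : upR N S' x t) (h2 : upR N S' t m) : t ∈ seg N S' x m :=
  Finset.mem_filter.mpr ⟨ht, h1, h2⟩

theorem seg_not_root {N : PhyloNet V X} {S' : Dgraph V} {x m t : V}
    (h : t ∈ seg N S' x m) (htm : t ≠ m) : t ≠ N.root := by
  rintro rfl
  exact htm (upR_root_eq (seg_mem h).2.2).symm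

theorem seg_par {N : PhyloNet V X} {S' : Dgraph V} (E : GoodEmb N S') {x m t : V}
    (h : t ∈ seg N S' x m) (htm : t ≠ m) :
    (par N S' t, t) ∈ chainE N S' x m ∧ par N S' t ∈ seg N S' x m := by
  obtain ⟨htN, hxt, htmr⟩ := seg_mem h
  have htr : t ≠ N.root := seg_not_root h htm
  have hstep : upstep N S' t (par N S' t) := ⟨htN, htr, rfl⟩
  have hedge : (par N S' t, t) ∈ N.G.edges := upstep_edge E hstep
  have hupm : upR N S' (par N S' t) m := (upR_ne_root_step htmr htm).2.2
  have hpseg : par N S' t ∈ seg N S' x m :=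
    seg_mem' (upstep_mem E hstep) (hxt.tail hstep) hupm
  exact ⟨Finset.mem_filter.mpr ⟨hedge, h, htm, rfl⟩, hpseg⟩

/-- Localized connectivity along a chain. -/
theorem chain_conn {N : PhyloNet V X} {S' : Dgraph V} (E : GoodEmb N S')
    {Eset : Finset (V × V)} {c d : V} (h : upR N S' c d)
    (hcond : ∀ t, upR N S' c t → upR N S' t d → t ≠ d → (par N S' t, t) ∈ Eset) :
    Relation.ReflTransGen (fun p q => (p, q) ∈ Eset ∨ (q, p) ∈ Eset) c d := by
  induction h using Relation.ReflTransGen.head_induction_on with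
  | refl => exact .refl
  | @head a c0 hstep hrest ih =>
    have had : a ≠ d := by
      intro hh
      subst hh
      have h1 : rnk N c0 < rnk N a := rnk_lt N (upstep_edge E hstep)
      have h2 : rnk N a ≤ rnk N c0 := upR_rnk_le E hrest
      omega
    have hedge : (par N S' a, a) ∈ Eset :=
      hcond a .refl (Relation.ReflTransGen.head hstep hrest) had
    have hc0 : c0 = par N S' a := hstep.2.2
    refine Relation.ReflTransGen.head (Or.inr (by rw [hc0]; exact hedge)) (ih ?_)
    intro t hct htd htd'
    exact hcond t (Relation.ReflTransGen.head hstep hct) htd htd'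

/-- The lasso graph through the two in-edges of a reticulation. -/
def lasso (N : PhyloNet V X) (S' : Dgraph V) (w pv v m : V) : Dgraph V where
  verts := insert v (insert w (insert pv ((seg N S' w m ∪ seg N S' pv m) ∪
    ((chainE N S' w m ∪ chainE N S' pv m).image Prod.fst))))
  edges := insert (w, v) (insert (pv, v) (chainE N S' w m ∪ chainE N S' pv m))
  edges_sub := by
    intro e he
    rcases Finset.mem_insert.mp he with rfl | he
    · exact ⟨Finset.mem_insert_of_mem (Finset.mem_insert_self _ _), Finset.mem_insert_self _ _⟩
    rcases Finset.mem_insert.mp he with rfl | he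
    · exact ⟨Finset.mem_insert_of_mem (Finset.mem_insert_of_mem (Finset.mem_insert_self _ _)),
        Finset.mem_insert_self _ _⟩
    constructor
    · refine Finset.mem_insert_of_mem (Finset.mem_insert_of_mem (Finset.mem_insert_of_mem
        (Finset.mem_union_right _ ?_)))
      exact Finset.mem_image_of_mem _ he
    · rcases Finset.mem_union.mp he with h | h
      · refine Finset.mem_insert_of_mem (Finset.mem_insert_of_mem (Finset.mem_insert_of_mem
          (Finset.mem_union_left _ (Finset.mem_union_left _ ?_))))
        exact (Finset.mem_filter.mp h).2.1
      · refine Finset.mem_insert_of_mem (Finset.mem_insert_of_mem (Finset.mem_insert_of_mem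
          (Finset.mem_union_left _ (Finset.mem_union_right _ ?_))))
        exact (Finset.mem_filter.mp h).2.1

theorem lasso_verts_mem {N : PhyloNet V X} {S' : Dgraph V} (E : GoodEmb N S')
    {w pv v m : V} (hwN : w ∈ N.G.verts) (hpvN : pv ∈ N.G.verts)
    (hwm : upR N S' w m) (hpvm : upR N S' pv m) {u : V} :
    u ∈ (lasso N S' w pv v m).verts ↔ u = v ∨ u ∈ seg N S' w m ∪ seg N S' pv m := by
  have hwseg : w ∈ seg N S' w m := seg_mem' hwN .refl hwm
  have hpvseg : pv ∈ seg N S' pv m := seg_mem' hpvN .refl hpvm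
  constructor
  · intro hu
    rcases Finset.mem_insert.mp hu with rfl | hu
    · exact Or.inl rfl
    rcases Finset.mem_insert.mp hu with rfl | hu
    · exact Or.inr (Finset.mem_union_left _ hwseg)
    rcases Finset.mem_insert.mp hu with rfl | hu
    · exact Or.inr (Finset.mem_union_right _ hpvseg)
    rcases Finset.mem_union.mp hu with hu | hu
    · exact Or.inr hu
    · obtain ⟨e, he, rfl⟩ := Finset.mem_image.mp hu
      rcases Finset.mem_union.mp he with he | he
      · obtain ⟨_, hseg, hm, hpar⟩ := Finset.mem_filter.mp he
        refine Or.inr (Finset.mem_union_left _ ?_)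
        rw [hpar]
        exact (seg_par E hseg hm).2
      · obtain ⟨_, hseg, hm, hpar⟩ := Finset.mem_filter.mp he
        refine Or.inr (Finset.mem_union_right _ ?_)
        rw [hpar]
        exact (seg_par E hseg hm).2
  · intro hu
    rcases hu with rfl | hu
    · exact Finset.mem_insert_self _ _
    · exact Finset.mem_insert_of_mem (Finset.mem_insert_of_mem (Finset.mem_insert_of_mem
        (Finset.mem_union_left _ hu)))

theorem lasso_subgraph {N : PhyloNet V X} {S' : Dgraph V} (E : GoodEmb N S')
    {w pv v m : V} (hwN : w ∈ N.G.verts) (hpvN : pv ∈ N.G.verts) (hvN : v ∈ N.G.verts)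
    (hwm : upR N S' w m) (hpvm : upR N S' pv m)
    (hwv : (w, v) ∈ N.G.edges) (hpvv : (pv, v) ∈ N.G.edges) :
    (lasso N S' w pv v m).IsSubgraph N.G := by
  constructor
  · intro u hu
    rcases (lasso_verts_mem E hwN hpvN hwm hpvm).mp hu with rfl | hu
    · exact hvN
    · rcases Finset.mem_union.mp hu with h | h
      · exact (seg_mem h).1
      · exact (seg_mem h).1
  · intro e he
    rcases Finset.mem_insert.mp he with rfl | he
    · exact hwv
    rcases Finset.mem_insert.mp he with rfl | he
    · exact hpvv
    rcases Finset.mem_union.mp he with h | h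
    · exact Finset.mem_of_mem_filter _ h
    · exact Finset.mem_of_mem_filter _ h

end MainBoundAuxF2
section MainBoundAuxF3

open Relation

variable {V : Type} {X : Finset V}

theorem lasso_biconnected {N : PhyloNet V X} {S' : Dgraph V} (E : GoodEmb N S')
    {w pv v m : V}
    (hwN : w ∈ N.G.verts) (hpvN : pv ∈ N.G.verts)
    (hwm : upR N S' w m) (hpvm : upR N S' pv m)
    (hrw : rnk N w < rnk N v) (hrpv : rnk N pv < rnk N v)
    (hmeet : ∀ t, upR N S' w t → upR N S' pv t → upR N S' t m → t = m) :
    (lasso N S' w pv v m).Biconnected := by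
  set L := lasso N S' w pv v m with hL
  have hmN : m ∈ N.G.verts := upR_mem E hwN hwm
  have hvs : ∀ t, t ∈ seg N S' w m ∪ seg N S' pv m → t ≠ v := by
    rintro t ht rfl
    rcases Finset.mem_union.mp ht with h | h
    · have := upR_rnk_le E (seg_mem h).2.1
      omega
    · have := upR_rnk_le E (seg_mem h).2.1
      omega
  have hsegint : ∀ t, t ∈ seg N S' w m → t ∈ seg N S' pv m → t = m := fun t h1 h2 =>
    hmeet t (seg_mem h1).2.1 (seg_mem h2).2.1 (seg_mem h1).2.2
  have hcapw : (w, v) ∈ L.edges := Finset.mem_insert_self _ _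
  have hcappv : (pv, v) ∈ L.edges := Finset.mem_insert_of_mem (Finset.mem_insert_self _ _)
  have hchw : chainE N S' w m ⊆ L.edges := fun e he =>
    Finset.mem_insert_of_mem (Finset.mem_insert_of_mem (Finset.mem_union_left _ he))
  have hchpv : chainE N S' pv m ⊆ L.edges := fun e he =>
    Finset.mem_insert_of_mem (Finset.mem_insert_of_mem (Finset.mem_union_right _ he))
  -- chain connectivity within the deleted graph
  have hchain : ∀ (z c d x : V), x ∈ N.G.verts → upR N S' x m →
      chainE N S' x m ⊆ L.edges →
      upR N S' x c → upR N S' c d → upR N S' d m →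
      (∀ t, upR N S' c t → upR N S' t d → t ≠ z) →
      Relation.ReflTransGen (L.deleteVert z).adj c d := by
    intro z c d x hxN hxm hchx hxc hcd hdm hz
    refine Relation.ReflTransGen.mono (fun a b h => h) _ _ (chain_conn E hcd ?_)
    intro t hct htd htd'
    have htN : t ∈ N.G.verts := upR_mem E (upR_mem E hxN hxc) hct
    have hxt : upR N S' x t := hxc.trans hct
    have htm : upR N S' t m := htd.trans hdm
    have htnem : t ≠ m := by
      rintro rfl
      exact htd' (upR_antisymm E hdm htd).symm
    have hseg : t ∈ seg N S' x m := seg_mem' htN hxt htm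
    have hedge := (seg_par E hseg htnem).1
    have htr : t ≠ N.root := seg_not_root hseg htnem
    have htz : t ≠ z := hz t hct htd
    have hparz : par N S' t ≠ z := by
      refine hz (par N S' t) (hct.tail ⟨htN, htr, rfl⟩) ?_
      exact (upR_ne_root_step htd htd').2.2
    exact Finset.mem_filter.mpr ⟨hchx hedge, hparz, htz⟩
  have hcapdel : ∀ (z x : V), (x, v) ∈ L.edges → x ≠ z → v ≠ z →
      (L.deleteVert z).adj x v := by
    intro z x hx hxz hvz
    exact Or.inl (Finset.mem_filter.mpr ⟨hx, hxz, hvz⟩)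
  -- reaching v in the deleted graph from a segment vertex
  have segreach : ∀ (z : V), z ≠ v → ∀ (x x' : V), x ∈ N.G.verts → x' ∈ N.G.verts →
      upR N S' x m → upR N S' x' m → (x, v) ∈ L.edges → (x', v) ∈ L.edges →
      chainE N S' x m ⊆ L.edges → chainE N S' x' m ⊆ L.edges →
      (∀ t, t ∈ seg N S' x m → t ∈ seg N S' x' m → t = m) →
      ∀ a ∈ seg N S' x m, a ≠ z →
        Relation.ReflTransGen (L.deleteVert z).adj a v := by
    intro z hzv x x' hxN hx'N hxm hx'm hcapx hcapx' hchx hchx' hint a haseg haz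
    obtain ⟨haN, hxa, ham⟩ := seg_mem haseg
    by_cases hzseg : z ∈ seg N S' x m
    · obtain ⟨hzN, hxz, hzm⟩ := seg_mem hzseg
      rcases upR_total hxa hxz with hcase | hcase
      · -- `a` is below `z` on the chain
        have hxz' : x ≠ z := by
          rintro rfl
          exact haz (upR_antisymm E hcase hxa)
        have h1 := hchain z x a x hxN hxm hchx .refl hxa ham
          (fun t h1 h2 => by rintro rfl; exact haz (upR_antisymm E hcase h2))
        exact (rtg_adj_symm _ h1).trans
          (Relation.ReflTransGen.single (hcapdel z x hcapx hxz' (Ne.symm hzv)))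
      · -- `a` is above `z` on the chain
        have hzm' : z ≠ m := by
          rintro rfl
          exact haz (upR_antisymm E ham hcase)
        have hznotx' : z ∉ seg N S' x' m := fun hmem => hzm' (hint z hzseg hmem)
        have h1 := hchain z a m x hxN hxm hchx hxa ham .refl
          (fun t h1 h2 => by rintro rfl; exact haz (upR_antisymm E h1 hcase))
        have h2 := hchain z x' m x' hx'N hx'm hchx' .refl hx'm .refl
          (fun t ht1 ht2 => by
            rintro rfl
            exact hznotx' (seg_mem' (upR_mem E hx'N ht1) ht1 ht2))
        have hx'z : x' ≠ z := by
          rintro rfl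
          exact hznotx' (seg_mem' hx'N .refl hx'm)
        exact (h1.trans (rtg_adj_symm _ h2)).trans
          (Relation.ReflTransGen.single (hcapdel z x' hcapx' hx'z (Ne.symm hzv)))
    · have hxz' : x ≠ z := by
        rintro rfl
        exact hzseg (seg_mem' hxN .refl hxm)
      have h1 := hchain z x a x hxN hxm hchx .refl hxa ham
        (fun t ht1 ht2 => by
          rintro rfl
          exact hzseg (seg_mem' (upR_mem E hxN ht1) ht1 (ht2.trans ham)))
      exact (rtg_adj_symm _ h1).trans
        (Relation.ReflTransGen.single (hcapdel z x hcapx hxz' (Ne.symm hzv)))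
  constructor
  · -- connectivity of the full lasso
    have hdelsub : ∀ z : V, (L.deleteVert z).edges ⊆ L.edges := fun z =>
      Finset.filter_subset _ _
    have hreach : ∀ u ∈ L.verts, Relation.ReflTransGen L.adj u v := by
      intro u hu
      rcases (lasso_verts_mem E hwN hpvN hwm hpvm).mp hu with rfl | hu
      · exact .refl
      · rcases Finset.mem_union.mp hu with hu | hu
        · obtain ⟨huN, hwu, hum⟩ := seg_mem hu
          have h1 := hchain v w u w hwN hwm hchw .refl hwu hum
            (fun t h1 h2 => hvs t (Finset.mem_union_left _
              (seg_mem' (upR_mem E hwN h1) h1 (h2.trans hum))))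
          refine (rtg_adj_mono (hdelsub v) (rtg_adj_symm _ h1)).trans ?_
          exact Relation.ReflTransGen.single (Or.inl hcapw)
        · obtain ⟨huN, hpvu, hum⟩ := seg_mem hu
          have h1 := hchain v pv u pv hpvN hpvm hchpv .refl hpvu hum
            (fun t h1 h2 => hvs t (Finset.mem_union_right _
              (seg_mem' (upR_mem E hpvN h1) h1 (h2.trans hum))))
          refine (rtg_adj_mono (hdelsub v) (rtg_adj_symm _ h1)).trans ?_
          exact Relation.ReflTransGen.single (Or.inl hcappv)
    intro a ha b hb
    exact (hreach a ha).trans (rtg_adj_symm _ (hreach b hb))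
  · intro z _
    by_cases hzv : z = v
    · subst hzv
      have hreach : ∀ u ∈ (L.deleteVert z).verts,
          Relation.ReflTransGen (L.deleteVert z).adj u m := by
        intro u hu
        obtain ⟨huz, huL⟩ := Finset.mem_erase.mp hu
        rcases (lasso_verts_mem E hwN hpvN hwm hpvm).mp huL with rfl | hu'
        · exact absurd rfl huz
        · rcases Finset.mem_union.mp hu' with hu' | hu'
          · obtain ⟨huN, hwu, hum⟩ := seg_mem hu'
            exact hchain z u m w hwN hwm hchw hwu hum .refl
              (fun t h1 h2 => hvs t (Finset.mem_union_left _
                (seg_mem' (upR_mem E huN h1) (hwu.trans h1) h2)))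
          · obtain ⟨huN, hpvu, hum⟩ := seg_mem hu'
            exact hchain z u m pv hpvN hpvm hchpv hpvu hum .refl
              (fun t h1 h2 => hvs t (Finset.mem_union_right _
                (seg_mem' (upR_mem E huN h1) (hpvu.trans h1) h2)))
      intro a ha b hb
      exact (hreach a ha).trans (rtg_adj_symm _ (hreach b hb))
    · have hreach : ∀ u ∈ (L.deleteVert z).verts,
          Relation.ReflTransGen (L.deleteVert z).adj u v := by
        intro u hu
        obtain ⟨huz, huL⟩ := Finset.mem_erase.mp hu
        rcases (lasso_verts_mem E hwN hpvN hwm hpvm).mp huL with rfl | hu'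
        · exact .refl
        · rcases Finset.mem_union.mp hu' with hu' | hu'
          · exact segreach z hzv w pv hwN hpvN hwm hpvm hcapw hcappv hchw hchpv
              hsegint u hu' huz
          · exact segreach z hzv pv w hpvN hwN hpvm hwm hcappv hcapw hchpv hchw
              (fun t h1 h2 => hsegint t h2 h1) u hu' huz
      intro a ha b hb
      exact (hreach a ha).trans (rtg_adj_symm _ (hreach b hb))

end MainBoundAuxF3
section MainBoundAuxG

open Relation

variable {V : Type} {X : Finset V}

theorem chain_const {C : Type} {N : PhyloNet V X} {S' : Dgraph V} (E : GoodEmb N S')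
    (F' : V → C) {c d : V} (h : upR N S' c d)
    (hnc : ∀ t, upR N S' c t → upR N S' t d → t ≠ d →
      Fxt N S' F' t = Fxt N S' F' (par N S' t)) :
    Fxt N S' F' c = Fxt N S' F' d := by
  induction h using Relation.ReflTransGen.head_induction_on with
  | refl => rfl
  | @head a c0 hstep hrest ih =>
    have had : a ≠ d := by
      intro hh
      subst hh
      have h1 : rnk N c0 < rnk N a := rnk_lt N (upstep_edge E hstep)
      have h2 : rnk N a ≤ rnk N c0 := upR_rnk_le E hrest
      omega
    have h1 : Fxt N S' F' a = Fxt N S' F' (par N S' a) :=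
      hnc a .refl (Relation.ReflTransGen.head hstep hrest) had
    have hc0 : c0 = par N S' a := hstep.2.2
    rw [h1, ← hc0]
    exact ih (fun t hct htd htd' => hnc t (Relation.ReflTransGen.head hstep hct) htd htd')

theorem N_noloop (N : PhyloNet V X) : ∀ e ∈ N.G.edges, e.1 ≠ e.2 := by
  intro e he heq
  apply N.acyclic e.1 e.2 he
  rw [heq]
  exact Relation.ReflTransGen.refl

theorem bad_witness {C : Type} {N : PhyloNet V X} {S' : Dgraph V} (E : GoodEmb N S')
    (F' : V → C) {e : V × V} (he : e ∈ N.G.edges)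
    (hch : Fxt N S' F' e.1 ≠ Fxt N S' F' e.2) (hes : e ∉ S'.edges) :
    ∃ (B : Dgraph V) (e' : V × V), Dgraph.IsBicomp N.G B ∧ e.2 ∈ B.verts ∧
      e' ∈ B.edges ∧ e' ∈ S'.edges ∧ F' e'.1 ≠ F' e'.2 := by
  obtain ⟨hyN, hyr, hxpar, _⟩ := bad_edge_spec E he hch hes
  have hwv : (e.1, e.2) ∈ N.G.edges := by rw [Prod.mk.eta]; exact he
  have hpvv : (par N S' e.2, e.2) ∈ N.G.edges := par_edge E hyN hyr
  have hwN : e.1 ∈ N.G.verts := (N.G.edges_sub _ hwv).1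
  have hpvN : par N S' e.2 ∈ N.G.verts := (N.G.edges_sub _ hpvv).1
  have hrw : rnk N e.1 < rnk N e.2 := rnk_lt N hwv
  have hrpv : rnk N (par N S' e.2) < rnk N e.2 := rnk_lt N hpvv
  have hMne : (N.G.verts.filter
      (fun z => upR N S' e.1 z ∧ upR N S' (par N S' e.2) z)).Nonempty :=
    ⟨N.root, Finset.mem_filter.mpr ⟨N.root_mem, upR_root E hwN, upR_root E hpvN⟩⟩
  obtain ⟨m, hmM, hmax⟩ := Finset.exists_max_image _ (rnk N) hMne
  rw [Finset.mem_filter] at hmM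
  have hmN := hmM.1
  have hwm := hmM.2.1
  have hpvm := hmM.2.2
  have hmeet : ∀ t, upR N S' e.1 t → upR N S' (par N S' e.2) t → upR N S' t m →
      t = m := by
    intro t h1 h2 h3
    have htN : t ∈ N.G.verts := upR_mem E hwN h1
    have htM : t ∈ N.G.verts.filter
        (fun z => upR N S' e.1 z ∧ upR N S' (par N S' e.2) z) :=
      Finset.mem_filter.mpr ⟨htN, h1, h2⟩
    exact upR_eq_of_rnk_le E h3 (hmax t htM)
  set L := lasso N S' e.1 (par N S' e.2) e.2 m with hLdef
  have hbic := lasso_biconnected E hwN hpvN hwm hpvm hrw hrpv hmeet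
  have hLsub := lasso_subgraph E hwN hpvN hyN hwm hpvm hwv hpvv
  obtain ⟨B, hB, hLB⟩ := exists_bicomp
    ((N.G.verts.card - L.verts.card) + (N.G.edges.card - L.edges.card)) L le_rfl hLsub hbic
  have hchw : chainE N S' e.1 m ⊆ L.edges := fun e' he' =>
    Finset.mem_insert_of_mem (Finset.mem_insert_of_mem (Finset.mem_union_left _ he'))
  have hchpv : chainE N S' (par N S' e.2) m ⊆ L.edges := fun e' he' =>
    Finset.mem_insert_of_mem (Finset.mem_insert_of_mem (Finset.mem_union_right _ he'))
  have hex : ∃ e', e' ∈ L.edges ∧ e' ∈ S'.edges ∧ F' e'.1 ≠ F' e'.2 := by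
    by_contra hno
    push_neg at hno
    have hcond : ∀ (x : V), x ∈ N.G.verts → upR N S' x m → chainE N S' x m ⊆ L.edges →
        Fxt N S' F' x = Fxt N S' F' m := by
      intro x hxN hxm hch'
      refine chain_const E F' hxm ?_
      intro t h1 h2 h3
      have htN := upR_mem E hxN h1
      have hseg : t ∈ seg N S' x m := seg_mem' htN h1 h2
      have hchainedge := (seg_par E hseg h3).1
      by_cases hts : t ∈ S'.verts
      · have htr : t ≠ N.root := seg_not_root hseg h3
        have hSedge : (par N S' t, t) ∈ S'.edges := par_S'_edge E hts htr
        have heq := hno _ (hch' hchainedge) hSedge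
        have hptS : par N S' t ∈ S'.verts := (S'.edges_sub _ hSedge).1
        rw [Fxt_S' hts, Fxt_S' hptS]
        exact heq.symm
      · exact Fxt_par E htN hts
    have h1 := hcond e.1 hwN hwm hchw
    have h2 := hcond (par N S' e.2) hpvN hpvm hchpv
    have h3 : Fxt N S' F' e.2 = Fxt N S' F' (par N S' e.2) := by
      by_cases hys : e.2 ∈ S'.verts
      · have hSedge : (par N S' e.2, e.2) ∈ S'.edges := par_S'_edge E hys hyr
        have hcap : (par N S' e.2, e.2) ∈ L.edges :=
          Finset.mem_insert_of_mem (Finset.mem_insert_self _ _)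
        have heq := hno _ hcap hSedge
        rw [Fxt_S' hys, Fxt_S' ((S'.edges_sub _ hSedge).1)]
        exact heq.symm
      · exact Fxt_par E hyN hys
    exact hch ((h1.trans h2.symm).trans h3.symm)
  obtain ⟨e', he'L, he'S, he'ch⟩ := hex
  have hyL : e.2 ∈ L.verts := Finset.mem_insert_self _ _
  exact ⟨B, e', hB, hLB.1 hyL, hLB.2 he'L, he'S, he'ch⟩

/-- Second counting bound: the number of bad heads is at most `k` per changing `S'`-edge. -/
theorem part2_count {C : Type} {N : PhyloNet V X} {S' : Dgraph V} (E : GoodEmb N S')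
    (F' : V → C) {k : ℕ} (hlev : N.IsLevel k) :
    (((N.G.edges.filter (fun e => Fxt N S' F' e.1 ≠ Fxt N S' F' e.2)) \ S'.edges).image
      Prod.snd).card ≤ k * ch F' S' := by
  classical
  set BadE := (N.G.edges.filter (fun e => Fxt N S' F' e.1 ≠ Fxt N S' F' e.2)) \ S'.edges
    with hBadE
  set BadN := BadE.image Prod.snd with hBadN
  set CHS := S'.edges.filter (fun e => F' e.1 ≠ F' e.2) with hCHS
  set P : V → (V × V) → Prop := fun y e' => ∃ B : Dgraph V,
    Dgraph.IsBicomp N.G B ∧ y ∈ B.verts ∧ e' ∈ B.edges ∧ e' ∈ S'.edges ∧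
      F' e'.1 ≠ F' e'.2 with hP
  have hPex : ∀ y ∈ BadN, ∃ e', P y e' := by
    intro y hy
    obtain ⟨e, he, rfl⟩ := Finset.mem_image.mp hy
    rw [hBadE, Finset.mem_sdiff, Finset.mem_filter] at he
    obtain ⟨B, e', hB, hyB, he'B, he'S, he'ch⟩ :=
      bad_witness E F' he.1.1 he.1.2 he.2
    exact ⟨e', B, hB, hyB, he'B, he'S, he'ch⟩
  set φ : V → V × V := fun y => if h : ∃ e', P y e' then h.choose else (N.root, N.root)
    with hφ
  have hφP : ∀ y ∈ BadN, P y (φ y) := by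
    intro y hy
    have h := hPex y hy
    simp only [hφ, dif_pos h]
    exact h.choose_spec
  have hφmem : ∀ y ∈ BadN, φ y ∈ CHS := by
    intro y hy
    obtain ⟨B, _, _, _, he'S, he'ch⟩ := hφP y hy
    exact Finset.mem_filter.mpr ⟨he'S, he'ch⟩
  have hretic : ∀ y ∈ BadN, N.IsRetic y := by
    intro y hy
    obtain ⟨e, he, rfl⟩ := Finset.mem_image.mp hy
    rw [hBadE, Finset.mem_sdiff, Finset.mem_filter] at he
    exact (bad_edge_spec E he.1.1 he.1.2 he.2).2.2.2
  rw [Finset.card_eq_sum_card_fiberwise hφmem]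
  have hfiber : ∀ e' ∈ CHS, (BadN.filter (fun y => φ y = e')).card ≤ k := by
    intro e' _
    by_cases hne : (BadN.filter (fun y => φ y = e')).Nonempty
    · obtain ⟨y0, hy0⟩ := hne
      rw [Finset.mem_filter] at hy0
      obtain ⟨B0, hB0, _, he'B0, _, _⟩ := hy0.2 ▸ hφP y0 hy0.1
      refine le_trans (Finset.card_le_card ?_) (hlev B0 hB0)
      intro y hy
      rw [Finset.mem_filter] at hy
      obtain ⟨B, hB, hyB, he'B, _, _⟩ := hy.2 ▸ hφP y hy.1
      have hBeq : B = B0 := bicomp_unique (N_noloop N) hB hB0 he'B he'B0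
      exact Finset.mem_filter.mpr ⟨hBeq ▸ hyB, hretic y hy.1⟩
    · rw [Finset.not_nonempty_iff_eq_empty.mp hne]
      simp
  calc ∑ e' ∈ CHS, (BadN.filter (fun y => φ y = e')).card
      ≤ ∑ _e' ∈ CHS, k := Finset.sum_le_sum hfiber
    _ = CHS.card * k := by rw [Finset.sum_const, smul_eq_mul]
    _ = k * ch F' S' := by rw [mul_comm]; rfl

end MainBoundAuxG
section MainBoundAuxH

open Relation

variable {V : Type} {X : Finset V}

theorem core_bound {C : Type} {N T : PhyloNet V X} {k : ℕ} (hlev : N.IsLevel k)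
    (hT : N.Displays T) {T' : PhyloNet V X} (hT' : N.Displays T') (f : V → C) :
    PS X f T.G ≤ (k + 1) * PS X f T'.G := by
  obtain ⟨S', hsubdiv', E⟩ := goodemb_of_displays N T' hT'
  obtain ⟨F', hF'ext, hF'ch⟩ := exists_ext_on_subdiv T' hsubdiv' f
  obtain ⟨_, ST, hsubST, _, hsubdivST⟩ := hT
  have hFext : IsExtension X f (Fxt N S' F') := by
    intro x hx
    rw [Fxt_S' (E.hX hx)]
    exact hF'ext x hx
  have h1 : PS X f T.G ≤ ch (Fxt N S' F') T.G := PS_le_ch _ hFext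
  have h2 : ch (Fxt N S' F') T.G ≤ ch (Fxt N S' F') ST := ch_subdivRTG_le _ hsubdivST
  have h3 : ch (Fxt N S' F') ST ≤ ch (Fxt N S' F') N.G := ch_mono _ hsubST.2
  have h4 := part1_count E F'
  have h5 := part2_count E F' hlev
  calc PS X f T.G ≤ ch (Fxt N S' F') N.G := le_trans h1 (le_trans h2 h3)
    _ ≤ ch F' S' + (((N.G.edges.filter
          (fun e => Fxt N S' F' e.1 ≠ Fxt N S' F' e.2)) \ S'.edges).image Prod.snd).card := h4
    _ ≤ ch F' S' + k * ch F' S' := Nat.add_le_add_left h5 _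
    _ = (k + 1) * ch F' S' := by ring
    _ ≤ (k + 1) * PS X f T'.G := Nat.mul_le_mul_left _ hF'ch

end MainBoundAuxH
/-- **Theorem 1 (main result).** Let `N` be a rooted binary level-`k` phylogenetic network
on `X`, let `T` be a phylogenetic `X`-tree in `D(N)`, and let `A = (f_1,…,f_n)` be a
(gap-free) alignment of characters on `X`. Then `PS(A,T) ≤ (k+1)·PS_sw(A,N)` and
`PS(A,T) ≤ (k+1)·PS_sw'(A,N)`. -/
theorem main_bound {V : Type} {X : Finset V} (N T : PhyloNet V X) (k : ℕ)
    (hlev : N.IsLevel k) (hT : N.Displays T)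
    {n : ℕ} (C : Fin n → Type) (A : (i : Fin n) → V → C i)
    (hA : ∀ i, IsCharacter X (A i)) :
    (∑ i, PS X (A i) T.G) ≤ (k + 1) * (∑ i, PSsw N (A i)) ∧
    (∑ i, PS X (A i) T.G) ≤
      (k + 1) * sInf {m | ∃ T' : PhyloNet V X, N.Displays T' ∧ (∑ i, PS X (A i) T'.G) = m} := by
  have hcore : ∀ (i : Fin n) (T' : PhyloNet V X), N.Displays T' →
      PS X (A i) T.G ≤ (k + 1) * PS X (A i) T'.G :=
    fun i T' h => core_bound hlev hT h (A i)
  constructor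
  · have hpt : ∀ i : Fin n, PS X (A i) T.G ≤ (k + 1) * PSsw N (A i) := by
      intro i
      have hne : {n' | ∃ T' : PhyloNet V X, N.Displays T' ∧ PS X (A i) T'.G = n'}.Nonempty :=
        ⟨PS X (A i) T.G, T, hT, rfl⟩
      obtain ⟨T', hT', hPS⟩ := Nat.sInf_mem hne
      calc PS X (A i) T.G ≤ (k + 1) * PS X (A i) T'.G := hcore i T' hT'
        _ = (k + 1) * PSsw N (A i) := by rw [hPS]; rfl
    calc ∑ i, PS X (A i) T.G ≤ ∑ i, (k + 1) * PSsw N (A i) :=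
          Finset.sum_le_sum (fun i _ => hpt i)
      _ = (k + 1) * ∑ i, PSsw N (A i) := by rw [Finset.mul_sum]
  · have hne : {m | ∃ T' : PhyloNet V X, N.Displays T' ∧ (∑ i, PS X (A i) T'.G) = m}.Nonempty :=
      ⟨∑ i, PS X (A i) T.G, T, hT, rfl⟩
    obtain ⟨T', hT', hPS⟩ := Nat.sInf_mem hne
    calc ∑ i, PS X (A i) T.G ≤ ∑ i, (k + 1) * PS X (A i) T'.G :=
          Finset.sum_le_sum (fun i _ => hcore i T' hT')
      _ = (k + 1) * ∑ i, PS X (A i) T'.G := by rw [Finset.mul_sum]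
      _ = (k + 1) * sInf {m | ∃ T' : PhyloNet V X, N.Displays T' ∧
            (∑ i, PS X (A i) T'.G) = m} := by rw [hPS]

end
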